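/- arXiv:2306.04583 — 12 statements merged into one kernel-verified Lean document; each statement's English description precedes it below -/
import Mathlib

section
/- Let X, S, A be finite nonempty sets with |X| ≥ 2 and ε ≥ 0 a real number. If f : X × S → A is an ε-almost collision-flat universal (ε-ACFU) hash function, then ε · |A| · (|X| − 1) ≥ |X| − |A|, i.e., ε ≥ (|X| − |A|)/(|A|(|X| − 1)). -/
/-- For any ε-ACFU hash function, ε ≥ (|X| − |A|)/(|A|(|X| − 1)). -/
theorem acfu_epsilon_lower_bound {X S A : Type*} [Fintype X] [Fintype S] [Fintype A]
    [Nonempty X] [Nonempty S] [Nonempty A] [DecidableEq A]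
    (hX : 2 ≤ Fintype.card X)
    (ε : ℝ) (hε : 0 ≤ ε) (f : X × S → A)
    (hACFU1 : ∀ (x : X) (α : A),
      (Fintype.card A : ℝ) * ((Finset.univ.filter fun s : S => f (x, s) = α).card : ℝ)
        = (Fintype.card S : ℝ))
    (hACFU2 : ∀ (x x' : X), x ≠ x' → ∀ (α : A),
      (Fintype.card A : ℝ) *
          ((Finset.univ.filter fun s : S => f (x, s) = α ∧ f (x', s) = α).card : ℝ)
        ≤ ε * (Fintype.card S : ℝ)) :
    ε * (Fintype.card A : ℝ) * ((Fintype.card X : ℝ) - 1)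
      ≥ (Fintype.card X : ℝ) - (Fintype.card A : ℝ) := by
  classical
  set nX : ℝ := (Fintype.card X : ℝ) with hnXdef
  set nS : ℝ := (Fintype.card S : ℝ) with hnSdef
  set nA : ℝ := (Fintype.card A : ℝ) with hnAdef
  have hnX : (0:ℝ) < nX := by
    rw [hnXdef]; exact_mod_cast Fintype.card_pos
  have hnS : (0:ℝ) < nS := by
    rw [hnSdef]; exact_mod_cast Fintype.card_pos
  have hnA : (0:ℝ) < nA := by
    rw [hnAdef]; exact_mod_cast Fintype.card_pos
  -- N α s = number of x with f (x,s) = α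
  set N : A → S → ℝ := fun α s => ((Finset.univ.filter fun x : X => f (x, s) = α).card : ℝ)
    with hNdef
  -- Step 1: row sums
  have hrow : ∀ s : S, ∑ α : A, N α s = nX := by
    intro s
    have := Finset.card_eq_sum_card_fiberwise
      (f := fun x : X => f (x, s)) (s := Finset.univ) (t := Finset.univ)
      (fun x _ => Finset.mem_univ _)
    have : (Fintype.card X : ℝ) = ∑ α : A, N α s := by
      simp only [hNdef]
      exact_mod_cast congrArg (Nat.cast : ℕ → ℝ) this
    exact this.symm
  -- Step 2: Cauchy-Schwarz per s
  have hCS : ∀ s : S, nX ^ 2 ≤ nA * ∑ α : A, (N α s) ^ 2 := by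
    intro s
    have h := sq_sum_le_card_mul_sum_sq (s := (Finset.univ : Finset A)) (f := fun α => N α s)
    rw [hrow s] at h
    simpa using h
  -- Step 3: pair expansion
  have hpair : ∑ s : S, ∑ α : A, (N α s) ^ 2
      = ∑ x : X, ∑ x' : X, ((Finset.univ.filter fun s : S => f (x, s) = f (x', s)).card : ℝ) := by
    have key : ∀ s : S, ∑ α : A, (N α s) ^ 2
        = ∑ x : X, ∑ x' : X, (if f (x, s) = f (x', s) then (1:ℝ) else 0) := by
      intro s
      have hN : ∀ α : A, N α s = ∑ x : X, (if f (x, s) = α then (1:ℝ) else 0) := by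
        intro α; simp [hNdef]
      calc ∑ α : A, (N α s) ^ 2
          = ∑ α : A, ∑ x : X, ∑ x' : X,
              ((if f (x, s) = α then (1:ℝ) else 0) * (if f (x', s) = α then (1:ℝ) else 0)) := by
            refine Finset.sum_congr rfl fun α _ => ?_
            rw [hN α, sq, Finset.sum_mul_sum]
        _ = ∑ x : X, ∑ x' : X, ∑ α : A,
              ((if f (x, s) = α then (1:ℝ) else 0) * (if f (x', s) = α then (1:ℝ) else 0)) := by
            rw [Finset.sum_comm]
            refine Finset.sum_congr rfl fun x _ => Finset.sum_comm
        _ = ∑ x : X, ∑ x' : X, (if f (x, s) = f (x', s) then (1:ℝ) else 0) := by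
            refine Finset.sum_congr rfl fun x _ => Finset.sum_congr rfl fun x' _ => ?_
            by_cases h : f (x, s) = f (x', s)
            · rw [if_pos h]
              rw [show (∑ α : A, (if f (x, s) = α then (1:ℝ) else 0)
                    * (if f (x', s) = α then (1:ℝ) else 0))
                  = ∑ α : A, (if α = f (x, s) then (1:ℝ) else 0) from
                Finset.sum_congr rfl fun α _ => by
                  by_cases hα : α = f (x, s) <;> simp [hα, ← h, eq_comm]]
              simp
            · rw [if_neg h]
              refine Finset.sum_eq_zero fun α _ => ?_
              by_cases h1 : f (x, s) = α
              · have h2 : f (x', s) ≠ α := fun hc => h (h1.trans hc.symm)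
                simp [h1, h2]
              · simp [h1]
    calc ∑ s : S, ∑ α : A, (N α s) ^ 2
        = ∑ s : S, ∑ x : X, ∑ x' : X, (if f (x, s) = f (x', s) then (1:ℝ) else 0) :=
          Finset.sum_congr rfl fun s _ => key s
      _ = ∑ x : X, ∑ x' : X, ∑ s : S, (if f (x, s) = f (x', s) then (1:ℝ) else 0) := by
          rw [Finset.sum_comm]
          refine Finset.sum_congr rfl fun x _ => Finset.sum_comm
      _ = ∑ x : X, ∑ x' : X, ((Finset.univ.filter fun s : S => f (x, s) = f (x', s)).card : ℝ) := by
          refine Finset.sum_congr rfl fun x _ => Finset.sum_congr rfl fun x' _ => ?_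
          simp [Finset.sum_boole]
  -- Step 4: off-diagonal bound
  have hoff : ∀ x x' : X, x ≠ x' →
      ((Finset.univ.filter fun s : S => f (x, s) = f (x', s)).card : ℝ) ≤ ε * nS := by
    intro x x' hxx
    have hfib : ((Finset.univ.filter fun s : S => f (x, s) = f (x', s)).card : ℝ)
        = ∑ α : A, ((Finset.univ.filter fun s : S => f (x, s) = α ∧ f (x', s) = α).card : ℝ) := by
      have := Finset.card_eq_sum_card_fiberwise
        (f := fun s : S => f (x, s))
        (s := Finset.univ.filter fun s : S => f (x, s) = f (x', s))
        (t := (Finset.univ : Finset A)) (fun s _ => Finset.mem_univ _)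
      rw [show ((Finset.univ.filter fun s : S => f (x, s) = f (x', s)).card : ℕ)
          = ∑ α : A, ((Finset.univ.filter fun s : S => f (x, s) = α ∧ f (x', s) = α).card) from by
        rw [this]
        refine Finset.sum_congr rfl fun α _ => ?_
        congr 1
        ext s
        simp only [Finset.mem_filter, Finset.mem_univ, true_and, Finset.filter_filter]
        constructor
        · rintro ⟨h1, h2⟩; exact ⟨h2, h1 ▸ h2⟩
        · rintro ⟨h1, h2⟩; exact ⟨h1.trans h2.symm, h1⟩]
      push_cast
      ring
    rw [hfib]
    have hbound : ∀ α : A,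
        ((Finset.univ.filter fun s : S => f (x, s) = α ∧ f (x', s) = α).card : ℝ) ≤ ε * nS / nA :=
      fun α => (le_div_iff₀' hnA).2 (hACFU2 x x' hxx α)
    calc ∑ α : A, ((Finset.univ.filter fun s : S => f (x, s) = α ∧ f (x', s) = α).card : ℝ)
        ≤ ∑ α : A, ε * nS / nA := Finset.sum_le_sum fun α _ => hbound α
      _ = nA * (ε * nS / nA) := by
          rw [Finset.sum_const, Finset.card_univ, nsmul_eq_mul, hnAdef]
      _ = ε * nS := by field_simp
  -- Diagonal entries
  have hdiag : ∀ x : X, ((Finset.univ.filter fun s : S => f (x, s) = f (x, s)).card : ℝ) = nS := by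
    intro x; simp [hnSdef]
  -- Bound the pair sum
  have hpairbound : ∑ x : X, ∑ x' : X,
      ((Finset.univ.filter fun s : S => f (x, s) = f (x', s)).card : ℝ)
      ≤ nX * (nS + (nX - 1) * (ε * nS)) := by
    have hx : ∀ x : X, ∑ x' : X,
        ((Finset.univ.filter fun s : S => f (x, s) = f (x', s)).card : ℝ)
        ≤ nS + (nX - 1) * (ε * nS) := by
      intro x
      rw [← Finset.sum_erase_add _ _ (Finset.mem_univ x)]
      have h1 : ∑ x' ∈ Finset.univ.erase x,
          ((Finset.univ.filter fun s : S => f (x, s) = f (x', s)).card : ℝ)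
          ≤ (nX - 1) * (ε * nS) := by
        calc ∑ x' ∈ Finset.univ.erase x,
            ((Finset.univ.filter fun s : S => f (x, s) = f (x', s)).card : ℝ)
            ≤ ∑ _x' ∈ Finset.univ.erase x, ε * nS :=
              Finset.sum_le_sum fun x' hx' =>
                hoff x x' (fun h => (Finset.ne_of_mem_erase hx') h.symm)
          _ = (nX - 1) * (ε * nS) := by
              rw [Finset.sum_const, Finset.card_erase_of_mem (Finset.mem_univ x),
                Finset.card_univ, nsmul_eq_mul, Nat.cast_sub (by omega), Nat.cast_one, hnXdef]
      linarith [hdiag x, h1]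
    calc ∑ x : X, ∑ x' : X, ((Finset.univ.filter fun s : S => f (x, s) = f (x', s)).card : ℝ)
        ≤ ∑ _x : X, (nS + (nX - 1) * (ε * nS)) := Finset.sum_le_sum fun x _ => hx x
      _ = nX * (nS + (nX - 1) * (ε * nS)) := by
          rw [Finset.sum_const, Finset.card_univ, nsmul_eq_mul, hnXdef]
  -- Combine
  have hlow : nS * nX ^ 2 ≤ nA * ∑ s : S, ∑ α : A, (N α s) ^ 2 := by
    have h1 : ∑ _s : S, nX ^ 2 ≤ ∑ s : S, nA * ∑ α : A, (N α s) ^ 2 :=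
      Finset.sum_le_sum fun s _ => hCS s
    have h2 : ∑ _s : S, nX ^ 2 = nS * nX ^ 2 := by
      rw [Finset.sum_const, Finset.card_univ, nsmul_eq_mul, hnSdef]
    rw [Finset.mul_sum]
    linarith
  have hfinal : nS * nX ^ 2 ≤ nA * (nX * (nS + (nX - 1) * (ε * nS))) := by
    calc nS * nX ^ 2 ≤ nA * ∑ s : S, ∑ α : A, (N α s) ^ 2 := hlow
      _ = nA * (∑ x : X, ∑ x' : X,
            ((Finset.univ.filter fun s : S => f (x, s) = f (x', s)).card : ℝ)) := by rw [hpair]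
      _ ≤ nA * (nX * (nS + (nX - 1) * (ε * nS))) :=
          mul_le_mul_of_nonneg_left hpairbound (le_of_lt hnA)
  -- final algebra: divide by nX * nS
  nlinarith [mul_pos hnX hnS, hfinal, hnX, hnS, hnA]
end

section
/- Let X, S, A be finite nonempty sets with 2 ≤ |A| < |X| and ε ≥ 0 a real number. If f : X × S → A is a nontrivial ε-almost collision-flat universal (ε-ACFU) hash function, then ε · |S| ≥ |A|. -/
/-- Simple lower bound |S| ≥ |A|/ε for a nontrivial ε-ACFU hash
function, stated as ε·|S| ≥ |A|. -/
theorem acfu_seed_size_lb_simple {X S A : Type*} [Fintype X] [Fintype S] [Fintype A]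
    [Nonempty X] [Nonempty S] [Nonempty A] [DecidableEq A]
    (hA : 2 ≤ Fintype.card A) (hAX : Fintype.card A < Fintype.card X)
    (ε : ℝ) (hε : 0 ≤ ε) (f : X × S → A)
    (hACFU1 : ∀ (x : X) (α : A),
      (Fintype.card A : ℝ) * ((Finset.univ.filter fun s : S => f (x, s) = α).card : ℝ)
        = (Fintype.card S : ℝ))
    (hACFU2 : ∀ (x x' : X), x ≠ x' → ∀ (α : A),
      (Fintype.card A : ℝ) *
          ((Finset.univ.filter fun s : S => f (x, s) = α ∧ f (x', s) = α).card : ℝ)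
        ≤ ε * (Fintype.card S : ℝ)) :
    ε * (Fintype.card S : ℝ) ≥ (Fintype.card A : ℝ) := by
  obtain ⟨s₀⟩ := ‹Nonempty S›
  obtain ⟨x, x', hne, heq⟩ := Fintype.exists_ne_map_eq_of_card_lt
    (fun x : X => f (x, s₀)) hAX
  set α := f (x, s₀) with hα
  have h2 := hACFU2 x x' hne α
  have hmem : s₀ ∈ Finset.univ.filter fun s : S => f (x, s) = α ∧ f (x', s) = α := by
    simp [hα, heq.symm]
  have hcard : (1 : ℝ) ≤ ((Finset.univ.filter fun s : S => f (x, s) = α ∧ f (x', s) = α).card : ℝ) := by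
    exact_mod_cast Finset.card_pos.mpr ⟨s₀, hmem⟩
  calc (Fintype.card A : ℝ) = (Fintype.card A : ℝ) * 1 := by ring
    _ ≤ (Fintype.card A : ℝ) * _ := by
        apply mul_le_mul_of_nonneg_left hcard (by positivity)
    _ ≤ ε * (Fintype.card S : ℝ) := h2
end

section
/- Let X, S, A be finite nonempty sets and let f : X × S → A. Suppose there exist natural numbers k, λ, μ with 2 ≤ k < |S|, λ ≥ 1 and μ ≥ 1 such that: (i) for every x ∈ X and α ∈ A, |{s ∈ S : f(x,s) = α}| = k; (ii) for all distinct s, s' ∈ S and every α ∈ A, |{x ∈ X : f(x,s) = f(x,s') = α}| = λ; (iii) for all distinct x, x' ∈ X and every α ∈ A, |{s ∈ S : f(x,s) = f(x',s) = α}| ∈ {0, μ}; and (iv) both values 0 and μ are attained in (iii). Then f is a nontrivial ε-almost collision-flat universal (ε-ACFU) hash function with ε = μ/k, and equality holds in the seed bound: |S| = 1 + |X|(|A| − 1)² / (ε·|A|·(|X| − |A|) + |A|² − |X|). -/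
open Finset

lemma count_swap {X S : Type*} [Fintype X] [Fintype S] (p : X → S → Prop)
    [∀ x s, Decidable (p x s)] (E : Finset S) :
    ∑ s ∈ E, (univ.filter fun x => p x s).card = ∑ x : X, (E.filter fun s => p x s).card := by
  simp only [Finset.card_filter]
  exact Finset.sum_comm

lemma count_swap2 {X S : Type*} [Fintype X] [Fintype S] (p : X → S → Prop)
    [∀ x s, Decidable (p x s)] (E : Finset X) :
    ∑ x ∈ E, (univ.filter fun s => p x s).card * (univ.filter fun s => p x s).card
      = ∑ s : S, ∑ t : S, (E.filter fun x => p x s ∧ p x t).card := by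
  simp only [Finset.card_filter, Finset.sum_mul_sum, ite_zero_mul_ite_zero, mul_one]
  rw [Finset.sum_comm]
  refine Finset.sum_congr rfl fun s _ => Finset.sum_comm

/-- If the dual of the mosaic of f is a mosaic of nontrivial
quasi-symmetric BIBDs with intersection numbers 0 and μ, then f is a nontrivial
(μ/k)-ACFU hash function attaining equality in the variance seed bound. -/
theorem dual_qs_mosaic_gives_seed_optimal_acfu {X S A : Type*}
    [Fintype X] [Fintype S] [Fintype A]
    [Nonempty X] [Nonempty S] [Nonempty A] [DecidableEq A]
    (f : X × S → A) (k lam μ : ℕ)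
    (hk2 : 2 ≤ k) (hkS : k < Fintype.card S) (hlam : 1 ≤ lam) (hμ : 1 ≤ μ)
    (hblocksize : ∀ (x : X) (α : A),
      (Finset.univ.filter fun s : S => f (x, s) = α).card = k)
    (hlambda : ∀ (s s' : S), s ≠ s' → ∀ (α : A),
      (Finset.univ.filter fun x : X => f (x, s) = α ∧ f (x, s') = α).card = lam)
    (hinter : ∀ (x x' : X), x ≠ x' → ∀ (α : A),
      (Finset.univ.filter fun s : S => f (x, s) = α ∧ f (x', s) = α).card = 0 ∨
      (Finset.univ.filter fun s : S => f (x, s) = α ∧ f (x', s) = α).card = μ)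
    (hzero : ∃ (x x' : X) (α : A), x ≠ x' ∧
      (Finset.univ.filter fun s : S => f (x, s) = α ∧ f (x', s) = α).card = 0)
    (hmu : ∃ (x x' : X) (α : A), x ≠ x' ∧
      (Finset.univ.filter fun s : S => f (x, s) = α ∧ f (x', s) = α).card = μ) :
    (2 ≤ Fintype.card A ∧ Fintype.card A < Fintype.card X) ∧
    (∀ (x : X) (α : A),
      (Fintype.card A : ℝ) * ((Finset.univ.filter fun s : S => f (x, s) = α).card : ℝ)
        = (Fintype.card S : ℝ)) ∧
    (∀ (x x' : X), x ≠ x' → ∀ (α : A),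
      (Fintype.card A : ℝ) *
          ((Finset.univ.filter fun s : S => f (x, s) = α ∧ f (x', s) = α).card : ℝ)
        ≤ ((μ : ℝ) / (k : ℝ)) * (Fintype.card S : ℝ)) ∧
    (Fintype.card S : ℝ)
      = 1 + (Fintype.card X : ℝ) * ((Fintype.card A : ℝ) - 1) ^ 2 /
          (((μ : ℝ) / (k : ℝ)) * (Fintype.card A : ℝ) *
              ((Fintype.card X : ℝ) - (Fintype.card A : ℝ))
            + (Fintype.card A : ℝ) ^ 2 - (Fintype.card X : ℝ)) := by
  classical
  obtain ⟨x₀⟩ := ‹Nonempty X›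
  obtain ⟨s₀⟩ := ‹Nonempty S›
  obtain ⟨α₀⟩ := ‹Nonempty A›
  -- Step A : |S| = |A| * k
  have hv : Fintype.card S = Fintype.card A * k := by
    rw [← Finset.card_univ (α := S),
      Finset.card_eq_sum_card_fiberwise (f := fun s => f (x₀, s)) (t := univ)
        (fun x _ => mem_univ _)]
    simp [hblocksize x₀, Finset.sum_const, Finset.card_univ, mul_comm]
  have ha1 : 1 ≤ Fintype.card A := Fintype.card_pos
  have ha2 : 2 ≤ Fintype.card A := by
    rcases Nat.lt_or_ge (Fintype.card A) 2 with h | h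
    · have hA1 : Fintype.card A = 1 := by omega
      rw [hA1, one_mul] at hv
      omega
    · exact h
  -- Step C : constant replication number
  have hr : ∀ (s : S) (α : A),
      (univ.filter fun x => f (x, s) = α).card * (k - 1) = lam * (Fintype.card S - 1) := by
    intro s α
    have swap := count_swap (fun x s' => f (x, s) = α ∧ f (x, s') = α) (univ.erase s)
    have h1 : ∑ s' ∈ univ.erase s,
        (univ.filter fun x => f (x, s) = α ∧ f (x, s') = α).card
        = lam * (Fintype.card S - 1) := by
      rw [Finset.sum_congr rfl
        (fun s' hs' => hlambda s s' (fun h => (Finset.mem_erase.mp hs').1 h.symm) α)]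
      simp [Finset.card_erase_of_mem, Finset.card_univ, mul_comm]
    have h2 : ∀ x : X,
        ((univ.erase s).filter fun s' => f (x, s) = α ∧ f (x, s') = α).card
          = if f (x, s) = α then k - 1 else 0 := by
      intro x
      by_cases hx : f (x, s) = α
      · rw [if_pos hx]
        have he : ((univ.erase s).filter fun s' => f (x, s) = α ∧ f (x, s') = α)
            = ((univ.filter fun s' => f (x, s') = α).erase s) := by
          rw [Finset.filter_erase]
          congr 1
          exact Finset.filter_congr fun s' _ => by simp [hx]
        rw [he, Finset.card_erase_of_mem (by simp [hx]), hblocksize]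
      · rw [if_neg hx, Finset.card_eq_zero]
        exact Finset.filter_false_of_mem fun s' _ h => hx h.1
    rw [h1, Finset.sum_congr rfl fun x _ => h2 x, ← Finset.sum_filter,
      Finset.sum_const, smul_eq_mul] at swap
    exact swap.symm
  set r : ℕ := (univ.filter fun x => f (x, s₀) = α₀).card with hrdef
  have hrconst : ∀ (s : S) (α : A), (univ.filter fun x => f (x, s) = α).card = r := by
    intro s α
    have := (hr s α).trans (hr s₀ α₀).symm
    exact Nat.eq_of_mul_eq_mul_right (by omega) this
  -- Step D : |X| = |A| * r
  have hb : Fintype.card X = Fintype.card A * r := by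
    rw [← Finset.card_univ (α := X),
      Finset.card_eq_sum_card_fiberwise (f := fun x => f (x, s₀)) (t := univ)
        (fun x _ => mem_univ _)]
    rw [Finset.sum_congr rfl fun α _ => hrconst s₀ α]
    simp [Finset.card_univ, mul_comm]
  have hr1 : r * (k - 1) = lam * (Fintype.card S - 1) := hr s₀ α₀
  have hr2 : 2 ≤ r := by
    by_contra h
    push_neg at h
    have h1 : r * (k - 1) ≤ 1 * (k - 1) := Nat.mul_le_mul_right _ (by omega)
    have h2 : Fintype.card S - 1 ≤ lam * (Fintype.card S - 1) :=
      Nat.le_mul_of_pos_left _ hlam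
    have h3 : 2 * k ≤ Fintype.card S := by
      rw [hv]; exact Nat.mul_le_mul_right k ha2
    have h4 : Fintype.card S - 1 ≤ 1 * (k - 1) := le_trans (h2.trans hr1.symm.le) h1
    omega
  -- Step F : quasi-symmetric counting
  set E : Finset X := univ.erase x₀ with hEdef
  have hF1 : ∑ x' ∈ E,
      (univ.filter fun s => f (x₀, s) = α₀ ∧ f (x', s) = α₀).card = k * (r - 1) := by
    have swap := count_swap (X := S) (S := X)
      (fun s x' => f (x₀, s) = α₀ ∧ f (x', s) = α₀) E
    have h2 : ∀ s : S,
        (E.filter fun x' => f (x₀, s) = α₀ ∧ f (x', s) = α₀).card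
          = if f (x₀, s) = α₀ then r - 1 else 0 := by
      intro s
      by_cases hx : f (x₀, s) = α₀
      · rw [if_pos hx]
        have he : (E.filter fun x' => f (x₀, s) = α₀ ∧ f (x', s) = α₀)
            = ((univ.filter fun x' => f (x', s) = α₀).erase x₀) := by
          rw [hEdef, Finset.filter_erase]
          congr 1
          exact Finset.filter_congr fun x' _ => by simp [hx]
        rw [he, Finset.card_erase_of_mem (by simp [hx]), hrconst]
      · rw [if_neg hx, Finset.card_eq_zero]
        exact Finset.filter_false_of_mem fun x' _ h => hx h.1
    rw [Finset.sum_congr rfl fun s _ => h2 s, ← Finset.sum_filter,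
      Finset.sum_const, smul_eq_mul, hblocksize] at swap
    exact swap
  have hF2 : ∑ x' ∈ E,
      (univ.filter fun s => f (x₀, s) = α₀ ∧ f (x', s) = α₀).card *
        (univ.filter fun s => f (x₀, s) = α₀ ∧ f (x', s) = α₀).card
      = k * ((r - 1) + (k - 1) * (lam - 1)) := by
    rw [count_swap2 (fun x' s => f (x₀, s) = α₀ ∧ f (x', s) = α₀) E]
    have hN : ∀ s t : S,
        (E.filter fun x' => (f (x₀, s) = α₀ ∧ f (x', s) = α₀) ∧
            (f (x₀, t) = α₀ ∧ f (x', t) = α₀)).card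
          = if f (x₀, s) = α₀ then
              (if f (x₀, t) = α₀ then (if s = t then r - 1 else lam - 1) else 0)
            else 0 := by
      intro s t
      by_cases h1 : f (x₀, s) = α₀
      · by_cases h2 : f (x₀, t) = α₀
        · rw [if_pos h1, if_pos h2]
          by_cases hst : s = t
          · subst hst
            rw [if_pos rfl]
            have he : (E.filter fun x' => (f (x₀, s) = α₀ ∧ f (x', s) = α₀) ∧
                (f (x₀, s) = α₀ ∧ f (x', s) = α₀))
                = ((univ.filter fun x' => f (x', s) = α₀).erase x₀) := by
              rw [hEdef, Finset.filter_erase]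
              congr 1
              exact Finset.filter_congr fun x' _ => by simp [h1]
            rw [he, Finset.card_erase_of_mem (by simp [h1]), hrconst]
          · rw [if_neg hst]
            have he : (E.filter fun x' => (f (x₀, s) = α₀ ∧ f (x', s) = α₀) ∧
                (f (x₀, t) = α₀ ∧ f (x', t) = α₀))
                = ((univ.filter fun x' => f (x', s) = α₀ ∧ f (x', t) = α₀).erase x₀) := by
              rw [hEdef, Finset.filter_erase]
              congr 1
              exact Finset.filter_congr fun x' _ => by simp [h1, h2]
            rw [he, Finset.card_erase_of_mem (by simp [h1, h2]), hlambda s t hst α₀]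
        · rw [if_pos h1, if_neg h2, Finset.card_eq_zero]
          exact Finset.filter_false_of_mem fun x' _ h => h2 h.2.1
      · rw [if_neg h1, Finset.card_eq_zero]
        exact Finset.filter_false_of_mem fun x' _ h => h1 h.1.1
    rw [Finset.sum_congr rfl fun s _ => Finset.sum_congr rfl fun t _ => hN s t]
    have hsplit : ∀ s : S,
        (∑ t : S, if f (x₀, s) = α₀ then
            (if f (x₀, t) = α₀ then (if s = t then r - 1 else lam - 1) else 0) else 0)
          = if f (x₀, s) = α₀ then
              (∑ t : S, if f (x₀, t) = α₀ then (if s = t then r - 1 else lam - 1) else 0)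
            else 0 := by
      intro s; split_ifs <;> simp
    rw [Finset.sum_congr rfl fun s _ => hsplit s]
    rw [← Finset.sum_filter]
    have hinner : ∀ s ∈ (univ.filter fun s : S => f (x₀, s) = α₀),
        (∑ t : S, if f (x₀, t) = α₀ then (if s = t then r - 1 else lam - 1) else 0)
          = (r - 1) + (k - 1) * (lam - 1) := by
      intro s hs
      rw [← Finset.sum_filter, ← Finset.add_sum_erase _ _ hs, if_pos rfl]
      congr 1
      rw [Finset.sum_congr rfl (fun t ht =>
        if_neg (fun h => (Finset.mem_erase.mp ht).1 h.symm)),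
        Finset.sum_const, smul_eq_mul, Finset.card_erase_of_mem hs, hblocksize]
    rw [Finset.sum_congr rfl hinner, Finset.sum_const, smul_eq_mul, hblocksize]
  have hF2' : ∑ x' ∈ E,
      (univ.filter fun s => f (x₀, s) = α₀ ∧ f (x', s) = α₀).card *
        (univ.filter fun s => f (x₀, s) = α₀ ∧ f (x', s) = α₀).card
      = μ * ∑ x' ∈ E,
        (univ.filter fun s => f (x₀, s) = α₀ ∧ f (x', s) = α₀).card := by
    rw [Finset.mul_sum]
    refine Finset.sum_congr rfl fun x' hx' => ?_
    rcases hinter x₀ x' (fun h => (Finset.mem_erase.mp hx').1 h.symm) α₀ with h | h <;>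
      rw [h] <;> ring
  have hkey : μ * (k * (r - 1)) = k * ((r - 1) + (k - 1) * (lam - 1)) := by
    rw [← hF1, ← hF2', hF2]
  -- cast everything to the reals
  have hv1 : 1 ≤ Fintype.card S := Fintype.card_pos
  have hx1 : 1 ≤ Fintype.card X := Fintype.card_pos
  have hk1 : (1:ℕ) ≤ k := by omega
  have hr1' : (1:ℕ) ≤ r := by omega
  have hK0 : (k:ℝ) ≠ 0 := by positivity
  have hvR : (Fintype.card S : ℝ) = (Fintype.card A : ℝ) * k := by exact_mod_cast hv
  have hbR : (Fintype.card X : ℝ) = (Fintype.card A : ℝ) * r := by exact_mod_cast hb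
  have hr1R : (r:ℝ) * ((k:ℝ) - 1) = (lam:ℝ) * ((Fintype.card S : ℝ) - 1) := by
    have := congrArg (Nat.cast : ℕ → ℝ) hr1
    push_cast [Nat.cast_sub hk1, Nat.cast_sub hv1] at this
    exact this
  have hkeyR : (μ:ℝ) * ((k:ℝ) * ((r:ℝ) - 1))
      = (k:ℝ) * (((r:ℝ) - 1) + ((k:ℝ) - 1) * ((lam:ℝ) - 1)) := by
    have := congrArg (Nat.cast : ℕ → ℝ) hkey
    push_cast [Nat.cast_sub hk1, Nat.cast_sub hr1', Nat.cast_sub hlam] at this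
    exact this
  have hkeyR' : (μ:ℝ) * ((r:ℝ) - 1) = ((r:ℝ) - 1) + ((k:ℝ) - 1) * ((lam:ℝ) - 1) := by
    apply mul_left_cancel₀ hK0
    linear_combination hkeyR
  -- conclusions
  refine ⟨⟨ha2, ?_⟩, ?_, ?_, ?_⟩
  · rw [hb]
    calc Fintype.card A < Fintype.card A * 2 := by omega
      _ ≤ Fintype.card A * r := Nat.mul_le_mul_left _ hr2
  · intro x α
    rw [hblocksize x α]
    exact hvR.symm
  · intro x x' hxx α
    rcases hinter x x' hxx α with h | h <;> rw [h]
    · simp only [Nat.cast_zero, mul_zero]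
      positivity
    · rw [hvR]
      have : (μ:ℝ) / k * ((Fintype.card A : ℝ) * k) = (Fintype.card A : ℝ) * μ := by
        field_simp
      rw [this]
  · have hA2R : (2:ℝ) ≤ (Fintype.card A : ℝ) := by exact_mod_cast ha2
    have hV3R : (3:ℝ) ≤ (Fintype.card S : ℝ) := by
      have h3 : (3:ℕ) ≤ Fintype.card S := by omega
      exact_mod_cast h3
    have hBposR : (0:ℝ) < (Fintype.card X : ℝ) := by positivity
    set V : ℝ := (Fintype.card S : ℝ)
    set B : ℝ := (Fintype.card X : ℝ)
    set Aa : ℝ := (Fintype.card A : ℝ)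
    have hid : (V - 1) * ((μ:ℝ) / k * Aa * (B - Aa) + Aa ^ 2 - B) = B * (Aa - 1) ^ 2 := by
      rw [hvR] at hr1R
      rw [hvR, hbR]
      field_simp
      linear_combination ((Aa:ℝ) * (Aa * k - 1)) * hkeyR' - (Aa * ((k:ℝ) - 1)) * hr1R
    have hA1R : (1:ℝ) ≤ Aa - 1 := by linarith
    have hD0 : ((μ:ℝ) / k * Aa * (B - Aa) + Aa ^ 2 - B) ≠ 0 := by
      intro h
      rw [h, mul_zero] at hid
      have h1 : (0:ℝ) < (Aa - 1) ^ 2 := by nlinarith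
      have h2 : (0:ℝ) < B * (Aa - 1) ^ 2 := mul_pos hBposR h1
      linarith
    rw [← hid, mul_div_assoc, div_self hD0, mul_one]
    ring
end

section
/- Let x, a be natural numbers with x > a > 1. Then (x − a)/(a(x − 1)) ≤ (x − a²)/(x − a) if and only if x ≥ (a/2)·(a + √((a + 3)(a − 1)) + 1), where all quantities are interpreted as real numbers. -/
/-- The interval of feasible ε to which the variance bound applies
is nonempty iff x ≥ (a/2)(a + √((a+3)(a−1)) + 1). -/
theorem acfu_lb_comparison_nonempty (x a : ℕ) (hax : a < x) (ha : 1 < a) :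
    ((x : ℝ) - (a : ℝ)) / ((a : ℝ) * ((x : ℝ) - 1))
        ≤ ((x : ℝ) - (a : ℝ) ^ 2) / ((x : ℝ) - (a : ℝ))
    ↔ (x : ℝ) ≥ (a : ℝ) / 2 *
        ((a : ℝ) + Real.sqrt (((a : ℝ) + 3) * ((a : ℝ) - 1)) + 1) := by
  have hA : (2:ℝ) ≤ (a:ℝ) := by exact_mod_cast ha
  have hX : (a:ℝ) + 1 ≤ (x:ℝ) := by exact_mod_cast hax
  set A := (a:ℝ) with hAdef
  set X := (x:ℝ) with hXdef
  have h1 : 0 < A * (X - 1) := by nlinarith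
  have h2 : 0 < X - A := by nlinarith
  set r := Real.sqrt ((A + 3) * (A - 1)) with hrdef
  have hr0 : 0 ≤ r := Real.sqrt_nonneg _
  have hr2 : r ^ 2 = (A + 3) * (A - 1) := Real.sq_sqrt (by nlinarith)
  have hrA : A - 1 ≤ r := by nlinarith [sq_nonneg (r - (A - 1))]
  rw [div_le_div_iff₀ h1 h2, ge_iff_le]
  constructor
  · intro h
    have hQ : 0 ≤ X ^ 2 - A * (A + 1) * X + A ^ 2 := by nlinarith
    -- X - smaller root > 0
    have hq : 0 < X - A / 2 * (A + 1 - r) := by nlinarith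
    nlinarith [mul_pos hq hq]
  · intro h
    have hQ : 0 ≤ X ^ 2 - A * (A + 1) * X + A ^ 2 := by
      have hq : 0 ≤ X - A / 2 * (A + 1 - r) := by nlinarith
      have hp : 0 ≤ X - A / 2 * (A + 1 + r) := by nlinarith
      nlinarith [mul_nonneg hp hq]
    nlinarith
end

section
/- Let X, S, A be finite nonempty sets with 2 ≤ |A| < |X|, let ε = (|X| − |A|)/(|A|(|X| − 1)), and let f : X × S → A be an ε-almost collision-flat universal (ε-ACFU) hash function (i.e., an OCFU hash function). Then |A| divides |X|, and: (i) for every s ∈ S and α ∈ A, |A| · |{x ∈ X : f(x,s) = α}| = |X|; and (ii) for all distinct x, x' ∈ X and every α ∈ A, the real number |{s ∈ S : f(x,s) = f(x',s) = α}| equals exactly ε·|S|/|A|. -/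
/-- An OCFU hash function (ε optimal) has as mosaic a mosaic of
BIBDs: blocks have constant size |X|/|A| and any two distinct points lie in
exactly ε|S|/|A| common blocks of each member. -/
theorem ocfu_mosaic_of_bibds {X S A : Type*} [Fintype X] [Fintype S] [Fintype A]
    [Nonempty X] [Nonempty S] [Nonempty A] [DecidableEq A]
    (hA : 2 ≤ Fintype.card A) (hAX : Fintype.card A < Fintype.card X)
    (ε : ℝ)
    (hεopt : ε = ((Fintype.card X : ℝ) - (Fintype.card A : ℝ)) /
      ((Fintype.card A : ℝ) * ((Fintype.card X : ℝ) - 1)))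
    (f : X × S → A)
    (hACFU1 : ∀ (x : X) (α : A),
      (Fintype.card A : ℝ) * ((Finset.univ.filter fun s : S => f (x, s) = α).card : ℝ)
        = (Fintype.card S : ℝ))
    (hACFU2 : ∀ (x x' : X), x ≠ x' → ∀ (α : A),
      (Fintype.card A : ℝ) *
          ((Finset.univ.filter fun s : S => f (x, s) = α ∧ f (x', s) = α).card : ℝ)
        ≤ ε * (Fintype.card S : ℝ)) :
    Fintype.card A ∣ Fintype.card X ∧
    (∀ (s : S) (α : A),
      (Fintype.card A : ℝ) * ((Finset.univ.filter fun x : X => f (x, s) = α).card : ℝ)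
        = (Fintype.card X : ℝ)) ∧
    (∀ (x x' : X), x ≠ x' → ∀ (α : A),
      ((Finset.univ.filter fun s : S => f (x, s) = α ∧ f (x', s) = α).card : ℝ)
        = ε * (Fintype.card S : ℝ) / (Fintype.card A : ℝ)) := by
  classical
  set a : ℝ := (Fintype.card A : ℝ) with ha_def
  set cX : ℝ := (Fintype.card X : ℝ) with hcX_def
  set cS : ℝ := (Fintype.card S : ℝ) with hcS_def
  have haℕ : 0 < Fintype.card A := lt_of_lt_of_le two_pos hA
  have ha0 : (0:ℝ) < a := by rw [ha_def]; exact_mod_cast haℕ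
  have ha0' : a ≠ 0 := ne_of_gt ha0
  have ha2 : (2:ℝ) ≤ a := by rw [ha_def]; exact_mod_cast hA
  have hXa : a < cX := by rw [ha_def, hcX_def]; exact_mod_cast hAX
  have hX1 : (1:ℝ) < cX := by linarith
  have hX1' : cX - 1 ≠ 0 := by linarith
  have hXℕ : 1 ≤ Fintype.card X := Fintype.card_pos
  -- the per-α key statement
  have key : ∀ α : A,
      (∀ s : S, a * ((Finset.univ.filter fun x : X => f (x, s) = α).card : ℝ) = cX) ∧
      (∀ x x' : X, x ≠ x' →
        ((Finset.univ.filter fun s : S => f (x, s) = α ∧ f (x', s) = α).card : ℝ)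
          = ε * cS / a) := by
    intro α
    set b : ℝ := ε * cS / a with hb_def
    set ind : X → S → ℝ := fun x s => if f (x, s) = α then 1 else 0 with hind
    set N : S → ℝ := fun s => ((Finset.univ.filter fun x : X => f (x, s) = α).card : ℝ)
      with hNdef
    set C : X → X → ℝ := fun x x' =>
      ((Finset.univ.filter fun s : S => f (x, s) = α ∧ f (x', s) = α).card : ℝ) with hCdef
    set m : ℝ := cX / a with hm_def
    have hN : ∀ s, N s = ∑ x, ind x s := by
      intro s
      show ((Finset.univ.filter fun x : X => f (x, s) = α).card : ℝ) = _
      rw [Finset.card_filter]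
      push_cast
      rfl
    have hR : ∀ x : X, ∑ s, ind x s = cS / a := by
      intro x
      have h1 := hACFU1 x α
      have h2 : ((Finset.univ.filter fun s : S => f (x, s) = α).card : ℝ)
          = ∑ s, ind x s := by
        rw [Finset.card_filter]; push_cast; rfl
      rw [h2] at h1
      field_simp
      linarith
    have hC' : ∀ x x', C x x' = ∑ s, ind x s * ind x' s := by
      intro x x'
      show ((Finset.univ.filter fun s : S => f (x, s) = α ∧ f (x', s) = α).card : ℝ) = _
      rw [Finset.card_filter]
      push_cast
      apply Finset.sum_congr rfl
      intro s _
      by_cases h1 : f (x, s) = α <;> by_cases h2 : f (x', s) = α <;>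
        simp [hind, h1, h2]
    have hsumN : ∑ s, N s = cX * cS / a := by
      calc ∑ s, N s = ∑ s, ∑ x, ind x s := Finset.sum_congr rfl fun s _ => hN s
        _ = ∑ x, ∑ s, ind x s := Finset.sum_comm
        _ = ∑ _x : X, cS / a := Finset.sum_congr rfl fun x _ => hR x
        _ = cX * cS / a := by
            rw [Finset.sum_const, Finset.card_univ, nsmul_eq_mul]
            rw [hcX_def]; ring
    have hsumN2 : ∑ s, (N s)^2 = ∑ x, ∑ x', C x x' := by
      calc ∑ s, (N s)^2 = ∑ s, ∑ x, ∑ x', ind x s * ind x' s := by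
            apply Finset.sum_congr rfl
            intro s _
            rw [hN, sq, Finset.sum_mul_sum]
        _ = ∑ x, ∑ s, ∑ x', ind x s * ind x' s := Finset.sum_comm
        _ = ∑ x, ∑ x', ∑ s, ind x s * ind x' s :=
            Finset.sum_congr rfl fun x _ => Finset.sum_comm
        _ = ∑ x, ∑ x', C x x' :=
            Finset.sum_congr rfl fun x _ => Finset.sum_congr rfl fun x' _ => (hC' x x').symm
    have hdiag : ∀ x, C x x = cS / a := by
      intro x
      rw [hC' x x]
      have : ∀ s : S, ind x s * ind x s = ind x s := by
        intro s; by_cases h : f (x, s) = α <;> simp [hind, h]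
      rw [Finset.sum_congr rfl fun s _ => this s, hR]
    have hCb : ∀ x x', x ≠ x' → C x x' ≤ b := by
      intro x x' h
      have h2 := hACFU2 x x' h α
      rw [hb_def, le_div_iff₀ ha0]
      calc C x x' * a = a * C x x' := mul_comm _ _
        _ ≤ ε * cS := h2
    have herase_card : ∀ x : X, ((Finset.univ.erase x).card : ℝ) = cX - 1 := by
      intro x
      rw [Finset.card_erase_of_mem (Finset.mem_univ x), Finset.card_univ]
      rw [Nat.cast_sub hXℕ]
      simp [hcX_def]
    have hofferase : ∀ x : X, ∑ x' ∈ Finset.univ.erase x, C x x' ≤ (cX - 1) * b := by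
      intro x
      calc ∑ x' ∈ Finset.univ.erase x, C x x'
          ≤ (Finset.univ.erase x).card • b := by
            apply Finset.sum_le_card_nsmul
            intro x' hx'
            exact hCb x x' (Ne.symm (Finset.ne_of_mem_erase hx'))
        _ = (cX - 1) * b := by rw [nsmul_eq_mul, herase_card]
    have hsplit : ∀ x : X, ∑ x', C x x' = C x x + ∑ x' ∈ Finset.univ.erase x, C x x' :=
      fun x => (Finset.add_sum_erase _ _ (Finset.mem_univ x)).symm
    have arith1 : cX * (cS / a) + (cX * (cX - 1)) * b = cS * m^2 := by
      rw [hb_def, hm_def, hεopt]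
      field_simp
      ring
    have hCtot : ∑ x, ∑ x', C x x' ≤ cS * m^2 := by
      calc ∑ x, ∑ x', C x x'
          ≤ ∑ _x : X, (cS / a + (cX - 1) * b) := by
            apply Finset.sum_le_sum
            intro x _
            rw [hsplit x, hdiag x]
            have := hofferase x
            linarith
        _ = cX * (cS / a + (cX - 1) * b) := by
            rw [Finset.sum_const, Finset.card_univ, nsmul_eq_mul, hcX_def]
        _ = cS * m^2 := by rw [← arith1]; ring
    have hzero : ∑ s, (N s - m)^2 = 0 := by
      have hexp : ∑ s, (N s - m)^2 = ∑ s, (N s)^2 - 2 * m * (∑ s, N s) + cS * m^2 := by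
        have h1 : ∀ s : S, (N s - m)^2 = (N s)^2 - 2 * m * N s + m^2 := fun s => by ring
        rw [Finset.sum_congr rfl fun s _ => h1 s]
        rw [Finset.sum_add_distrib, Finset.sum_sub_distrib, ← Finset.mul_sum,
          Finset.sum_const, Finset.card_univ, nsmul_eq_mul, hcS_def]
      have hub : ∑ s, (N s - m)^2 ≤ 0 := by
        rw [hexp, hsumN]
        have h2 : 2 * m * (cX * cS / a) = 2 * (cS * m^2) := by
          rw [hm_def]; field_simp
        have := hsumN2 ▸ hCtot
        linarith
      have hlb : 0 ≤ ∑ s, (N s - m)^2 := Finset.sum_nonneg fun s _ => sq_nonneg _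
      linarith
    have hNs : ∀ s, N s = m := by
      intro s
      have h := (Finset.sum_eq_zero_iff_of_nonneg fun s _ => sq_nonneg (N s - m)).mp
        hzero s (Finset.mem_univ s)
      have := pow_eq_zero_iff (n := 2) (by norm_num) |>.mp h
      linarith [sub_eq_zero.mp this]
    constructor
    · intro s
      have := hNs s
      rw [hNdef] at this
      rw [show ((Finset.univ.filter fun x : X => f (x, s) = α).card : ℝ) = m from this,
        hm_def]
      field_simp
    · -- equality off-diagonal
      have hsumN2' : ∑ x, ∑ x', C x x' = cS * m^2 := by
        rw [← hsumN2]
        rw [Finset.sum_congr rfl fun s _ => by rw [hNs s]]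
        rw [Finset.sum_const, Finset.card_univ, nsmul_eq_mul, hcS_def]
      have hoffsum : ∑ x, ∑ x' ∈ Finset.univ.erase x, C x x' = cX * (cX - 1) * b := by
        have h1 : ∑ x, ∑ x', C x x'
            = ∑ x, C x x + ∑ x, ∑ x' ∈ Finset.univ.erase x, C x x' := by
          rw [← Finset.sum_add_distrib]
          exact Finset.sum_congr rfl fun x _ => hsplit x
        have h2 : ∑ x, C x x = cX * (cS / a) := by
          rw [Finset.sum_congr rfl fun x _ => hdiag x, Finset.sum_const,
            Finset.card_univ, nsmul_eq_mul, hcX_def]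
        rw [hsumN2', h2] at h1
        linarith [arith1]
      have hzero2 : ∑ x, ∑ x' ∈ Finset.univ.erase x, (b - C x x') = 0 := by
        have h3 : ∑ x, ∑ x' ∈ Finset.univ.erase x, (b - C x x')
            = ∑ x, (((Finset.univ.erase x).card : ℝ) * b
                - ∑ x' ∈ Finset.univ.erase x, C x x') := by
          apply Finset.sum_congr rfl
          intro x _
          rw [Finset.sum_sub_distrib, Finset.sum_const, nsmul_eq_mul]
        rw [h3]
        rw [Finset.sum_sub_distrib, hoffsum]
        rw [Finset.sum_congr rfl fun x _ => by rw [herase_card x]]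
        rw [Finset.sum_const, Finset.card_univ, nsmul_eq_mul, ← hcX_def]
        ring
      have hnn : ∀ x ∈ Finset.univ (α := X),
          0 ≤ ∑ x' ∈ Finset.univ.erase x, (b - C x x') := by
        intro x _
        apply Finset.sum_nonneg
        intro x' hx'
        have := hCb x x' (Ne.symm (Finset.ne_of_mem_erase hx'))
        linarith
      have hinner : ∀ x : X, ∑ x' ∈ Finset.univ.erase x, (b - C x x') = 0 := by
        intro x
        exact (Finset.sum_eq_zero_iff_of_nonneg hnn).mp hzero2 x (Finset.mem_univ x)
      intro x x' hxx'
      have hx'mem : x' ∈ Finset.univ.erase x :=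
        Finset.mem_erase.mpr ⟨Ne.symm hxx', Finset.mem_univ x'⟩
      have hnn' : ∀ y ∈ Finset.univ.erase x, 0 ≤ b - C x y := by
        intro y hy
        have := hCb x y (Ne.symm (Finset.ne_of_mem_erase hy))
        linarith
      have := (Finset.sum_eq_zero_iff_of_nonneg hnn').mp (hinner x) x' hx'mem
      have hCeq : C x x' = b := by linarith
      rw [hCdef] at hCeq
      exact hCeq
  -- assemble
  refine ⟨?_, fun s α => (key α).1 s, fun x x' h α => (key α).2 x x' h⟩
  obtain ⟨s₀⟩ := (inferInstance : Nonempty S)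
  obtain ⟨α₀⟩ := (inferInstance : Nonempty A)
  have h := (key α₀).1 s₀
  rw [ha_def, hcX_def] at h
  refine ⟨(Finset.univ.filter fun x : X => f (x, s₀) = α₀).card, ?_⟩
  exact_mod_cast h.symm
end

section
/- Let X, S, A be finite nonempty sets and let f : X × S → A. Suppose there exist natural numbers k, λ with 1 < k < |X| and λ ≥ 1 such that: (i) for every s ∈ S and α ∈ A, |{x ∈ X : f(x,s) = α}| = k; and (ii) for all distinct x, x' ∈ X and every α ∈ A, |{s ∈ S : f(x,s) = f(x',s) = α}| = λ. Then f is an ε-almost collision-flat universal (ε-ACFU) hash function with the optimal parameter ε = (|X| − |A|)/(|A|(|X| − 1)); moreover k·|A| = |X| and λ·|A| = ε·|S| (as real numbers). -/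
/-- If the mosaic of f is a mosaic of BIBD(|X|, k, λ), then f is
an OCFU hash function, with k·|A| = |X| and λ·|A| = ε·|S|. -/
theorem mosaic_of_bibds_gives_ocfu {X S A : Type*} [Fintype X] [Fintype S] [Fintype A]
    [Nonempty X] [Nonempty S] [Nonempty A] [DecidableEq A]
    (f : X × S → A) (k lam : ℕ) (hk1 : 1 < k) (hkX : k < Fintype.card X) (hlam : 1 ≤ lam)
    (hblocksize : ∀ (s : S) (α : A),
      (Finset.univ.filter fun x : X => f (x, s) = α).card = k)
    (hlambda : ∀ (x x' : X), x ≠ x' → ∀ (α : A),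
      (Finset.univ.filter fun s : S => f (x, s) = α ∧ f (x', s) = α).card = lam) :
    (∀ (x : X) (α : A),
      (Fintype.card A : ℝ) * ((Finset.univ.filter fun s : S => f (x, s) = α).card : ℝ)
        = (Fintype.card S : ℝ)) ∧
    (∀ (x x' : X), x ≠ x' → ∀ (α : A),
      (Fintype.card A : ℝ) *
          ((Finset.univ.filter fun s : S => f (x, s) = α ∧ f (x', s) = α).card : ℝ)
        ≤ (((Fintype.card X : ℝ) - (Fintype.card A : ℝ)) /
            ((Fintype.card A : ℝ) * ((Fintype.card X : ℝ) - 1))) * (Fintype.card S : ℝ)) ∧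
    (k : ℝ) * (Fintype.card A : ℝ) = (Fintype.card X : ℝ) ∧
    (lam : ℝ) * (Fintype.card A : ℝ)
      = (((Fintype.card X : ℝ) - (Fintype.card A : ℝ)) /
          ((Fintype.card A : ℝ) * ((Fintype.card X : ℝ) - 1))) * (Fintype.card S : ℝ) := by
  classical
  obtain ⟨s₀⟩ := ‹Nonempty S›
  -- |X| = |A| * k
  have hXA : Fintype.card X = Fintype.card A * k := by
    have h := Finset.card_eq_sum_card_fiberwise
      (fun (x : X) (_ : x ∈ Finset.univ) => Finset.mem_univ (f (x, s₀)))
    simpa [hblocksize, Finset.card_univ] using h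
  have hk1' : 0 < k - 1 := by omega
  -- replication identity: r_{x,α} * (k-1) = lam * (|X|-1)
  have key : ∀ (x : X) (α : A),
      (Finset.univ.filter fun s : S => f (x, s) = α).card * (k - 1)
        = lam * (Fintype.card X - 1) := by
    intro x α
    have h1 : ∀ s : S, f (x, s) = α →
        ((Finset.univ.erase x).filter fun x' : X => f (x', s) = α).card = k - 1 := by
      intro s hs
      have he : (Finset.univ.erase x).filter (fun x' : X => f (x', s) = α)
          = (Finset.univ.filter fun x' : X => f (x', s) = α).erase x := by
        ext y
        simp only [Finset.mem_filter, Finset.mem_erase, Finset.mem_univ, true_and, and_true]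
      rw [he, Finset.card_erase_of_mem (by simp [hs]), hblocksize]
    have hswap :
        ∑ x' ∈ Finset.univ.erase x,
          (Finset.univ.filter fun s : S => f (x, s) = α ∧ f (x', s) = α).card
        = ∑ s ∈ Finset.univ, if f (x, s) = α then
            ((Finset.univ.erase x).filter fun x' : X => f (x', s) = α).card else 0 := by
      simp only [Finset.card_filter]
      rw [Finset.sum_comm]
      refine Finset.sum_congr rfl fun s _ => ?_
      by_cases hs : f (x, s) = α <;> simp [hs]
    have hL : ∑ x' ∈ Finset.univ.erase x,
        (Finset.univ.filter fun s : S => f (x, s) = α ∧ f (x', s) = α).card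
        = lam * (Fintype.card X - 1) := by
      rw [Finset.sum_congr rfl fun x' hx' =>
        hlambda x x' (Ne.symm (Finset.mem_erase.mp hx').1) α]
      simp [Finset.card_erase_of_mem, Finset.card_univ, mul_comm]
    have hR : ∑ s ∈ Finset.univ, (if f (x, s) = α then
          ((Finset.univ.erase x).filter fun x' : X => f (x', s) = α).card else 0)
        = (Finset.univ.filter fun s : S => f (x, s) = α).card * (k - 1) := by
      rw [← Finset.sum_filter]
      rw [Finset.sum_congr rfl fun s hs => h1 s (Finset.mem_filter.mp hs).2]
      simp [mul_comm]
    rw [← hR, ← hswap, hL]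
  -- ACFU1 in ℕ
  have hACFU1 : ∀ (x : X) (α : A),
      Fintype.card A * (Finset.univ.filter fun s : S => f (x, s) = α).card
        = Fintype.card S := by
    intro x α
    have h := Finset.card_eq_sum_card_fiberwise
      (fun (s : S) (_ : s ∈ Finset.univ) => Finset.mem_univ (f (x, s)))
    have hconst : ∀ β : A, (Finset.univ.filter fun s : S => f (x, s) = β).card
        = (Finset.univ.filter fun s : S => f (x, s) = α).card := fun β =>
      Nat.eq_of_mul_eq_mul_right hk1' (by rw [key x β, key x α])
    have : Fintype.card S
        = Fintype.card A * (Finset.univ.filter fun s : S => f (x, s) = α).card := by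
      rw [← Finset.card_univ, h, Finset.sum_congr rfl fun β _ => hconst β,
        Finset.sum_const, Finset.card_univ, smul_eq_mul]
    exact this.symm
  -- real arithmetic setup
  obtain ⟨x₀⟩ := ‹Nonempty X›
  obtain ⟨α₀⟩ := ‹Nonempty A›
  have hXAr : (Fintype.card X : ℝ) = (Fintype.card A : ℝ) * k := by exact_mod_cast hXA
  have hr := hACFU1 x₀ α₀
  set r : ℕ := (Finset.univ.filter fun s : S => f (x₀, s) = α₀).card with hrdef
  have hSr : (Fintype.card S : ℝ) = (Fintype.card A : ℝ) * r := by exact_mod_cast hr.symm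
  have hX1 : 1 ≤ Fintype.card X := Fintype.card_pos
  have hkeyr : (r : ℝ) * ((k : ℝ) - 1) = (lam : ℝ) * ((Fintype.card X : ℝ) - 1) := by
    have h := key x₀ α₀
    have h2 : ((r * (k - 1) : ℕ) : ℝ) = ((lam * (Fintype.card X - 1) : ℕ) : ℝ) := by
      exact_mod_cast h
    push_cast [Nat.cast_sub hk1.le, Nat.cast_sub hX1] at h2
    exact h2
  have hcA1 : (1 : ℝ) ≤ (Fintype.card A : ℝ) := by
    have : 1 ≤ Fintype.card A := Fintype.card_pos
    exact_mod_cast this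
  have hcX3 : (3 : ℝ) ≤ (Fintype.card X : ℝ) := by
    have : 3 ≤ Fintype.card X := by omega
    exact_mod_cast this
  have hne : (Fintype.card A : ℝ) * ((Fintype.card X : ℝ) - 1) ≠ 0 := by
    have h1 : (0 : ℝ) < (Fintype.card A : ℝ) := by linarith
    have h2 : (0 : ℝ) < (Fintype.card X : ℝ) - 1 := by linarith
    positivity
  have heps : (lam : ℝ) * (Fintype.card A : ℝ)
      = (((Fintype.card X : ℝ) - (Fintype.card A : ℝ)) /
          ((Fintype.card A : ℝ) * ((Fintype.card X : ℝ) - 1))) * (Fintype.card S : ℝ) := by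
    rw [div_mul_eq_mul_div, eq_div_iff hne]
    linear_combination (-((Fintype.card A : ℝ) ^ 2)) * hkeyr
      - (Fintype.card S : ℝ) * hXAr
      - ((Fintype.card A : ℝ) * (k : ℝ) - (Fintype.card A : ℝ)) * hSr
  refine ⟨fun x α => ?_, fun x x' hxx' α => ?_, ?_, heps⟩
  · exact_mod_cast hACFU1 x α
  · rw [hlambda x x' hxx' α, ← heps, mul_comm]
  · rw [hXAr]; ring
end

section
/- Let X, S, A be finite nonempty sets with 2 ≤ |A| < |X|, let ε = (|X| − |A|)/(|A|(|X| − 1)), and let f : X × S → A be an ε-almost collision-flat universal (ε-ACFU) hash function (i.e., a nontrivial OCFU hash function). Then |S| · (|A| − 1) ≥ |A| · (|X| − 1). -/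
set_option maxHeartbeats 1000000

open Finset

def ocfuK {X S A : Type*} [Fintype X] [DecidableEq A] (f : X × S → A) (s : S) (α : A) : ℕ :=
  (Finset.univ.filter fun x : X => f (x, s) = α).card

def ocfuC {X S A : Type*} [Fintype S] [DecidableEq A] (f : X × S → A) (x x' : X) (α : A) : ℕ :=
  (Finset.univ.filter fun s : S => f (x, s) = α ∧ f (x', s) = α).card

def ocfuF {X S A : Type*} [Fintype S] [DecidableEq A] (f : X × S → A) (x : X) (α : A) : ℕ :=
  (Finset.univ.filter fun s : S => f (x, s) = α).card

lemma ocfuC_diag {X S A : Type*} [Fintype S] [DecidableEq A] (f : X × S → A) (x : X) (α : A) :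
    ocfuC f x x α = ocfuF f x α := by
  simp [ocfuC, ocfuF, and_self]

lemma ocfuK_sum {X S A : Type*} [Fintype X] [Fintype A] [DecidableEq A] (f : X × S → A)
    (s : S) : ∑ α : A, ocfuK f s α = Fintype.card X := by
  have h1 := Finset.card_eq_sum_card_fiberwise
    (fun (x : X) (_ : x ∈ (Finset.univ : Finset X)) => Finset.mem_univ (f (x, s)))
  rw [Finset.card_univ] at h1
  exact h1.symm

lemma sum4_swap {B C D E M : Type*} [Fintype B] [Fintype C] [Fintype D] [Fintype E]
    [AddCommMonoid M] (F : B → C → D → E → M) :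
    ∑ b : B, ∑ c : C, ∑ d : D, ∑ e : E, F b c d e
      = ∑ d : D, ∑ e : E, ∑ b : B, ∑ c : C, F b c d e := by
  calc ∑ b : B, ∑ c : C, ∑ d : D, ∑ e : E, F b c d e
      = ∑ q : B × C, ∑ d : D, ∑ e : E, F q.1 q.2 d e :=
        (Fintype.sum_prod_type (fun q : B × C => ∑ d : D, ∑ e : E, F q.1 q.2 d e)).symm
    _ = ∑ q : B × C, ∑ p : D × E, F q.1 q.2 p.1 p.2 :=
        Finset.sum_congr rfl fun q _ =>
          (Fintype.sum_prod_type (fun p : D × E => F q.1 q.2 p.1 p.2)).symm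
    _ = ∑ p : D × E, ∑ q : B × C, F q.1 q.2 p.1 p.2 := Finset.sum_comm
    _ = ∑ p : D × E, ∑ b : B, ∑ c : C, F b c p.1 p.2 :=
        Finset.sum_congr rfl fun p _ =>
          Fintype.sum_prod_type (fun q : B × C => F q.1 q.2 p.1 p.2)
    _ = ∑ d : D, ∑ e : E, ∑ b : B, ∑ c : C, F b c d e :=
        Fintype.sum_prod_type (fun p : D × E => ∑ b : B, ∑ c : C, F b c p.1 p.2)

lemma ocfu_double_count {X S A : Type*} [Fintype X] [Fintype S] [Fintype A] [DecidableEq A]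
    (f : X × S → A) :
    ∑ s : S, ∑ α : A, (ocfuK f s α) ^ 2 = ∑ x : X, ∑ x' : X, ∑ α : A, ocfuC f x x' α := by
  have step : ∀ (s : S) (α : A), (ocfuK f s α) ^ 2
      = ∑ x : X, ∑ x' : X, (if f (x, s) = α ∧ f (x', s) = α then 1 else 0) := by
    intro s α
    rw [sq, ocfuK, Finset.card_filter, Finset.sum_mul_sum]
    exact Finset.sum_congr rfl fun x _ => Finset.sum_congr rfl fun x' _ => by
      by_cases h1 : f (x, s) = α <;> by_cases h2 : f (x', s) = α <;> simp [h1, h2]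
  calc ∑ s : S, ∑ α : A, (ocfuK f s α) ^ 2
      = ∑ s : S, ∑ α : A, ∑ x : X, ∑ x' : X,
          (if f (x, s) = α ∧ f (x', s) = α then 1 else 0) :=
        Finset.sum_congr rfl fun s _ => Finset.sum_congr rfl fun α _ => step s α
    _ = ∑ x : X, ∑ x' : X, ∑ s : S, ∑ α : A,
          (if f (x, s) = α ∧ f (x', s) = α then 1 else 0) :=
        sum4_swap (fun s α x x' => if f (x, s) = α ∧ f (x', s) = α then 1 else 0)
    _ = ∑ x : X, ∑ x' : X, ∑ α : A, ∑ s : S,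
          (if f (x, s) = α ∧ f (x', s) = α then 1 else 0) :=
        Finset.sum_congr rfl fun x _ => Finset.sum_congr rfl fun x' _ => Finset.sum_comm
    _ = ∑ x : X, ∑ x' : X, ∑ α : A, ocfuC f x x' α :=
        Finset.sum_congr rfl fun x _ => Finset.sum_congr rfl fun x' _ =>
          Finset.sum_congr rfl fun α _ => (Finset.card_filter _ _).symm

lemma ocfu_split {X S A : Type*} [Fintype X] [Fintype S] [Fintype A] [DecidableEq X]
    [DecidableEq A] (f : X × S → A) :
    ∑ x : X, ∑ x' : X, ∑ α : A, ocfuC f x x' α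
      = (∑ x : X, ∑ α : A, ocfuC f x x α)
        + ∑ p ∈ (Finset.univ : Finset X).offDiag, ∑ α : A, ocfuC f p.1 p.2 α := by
  calc ∑ x : X, ∑ x' : X, ∑ α : A, ocfuC f x x' α
      = ∑ p : X × X, ∑ α : A, ocfuC f p.1 p.2 α :=
        (Fintype.sum_prod_type (fun p : X × X => ∑ α : A, ocfuC f p.1 p.2 α)).symm
    _ = ∑ p ∈ (Finset.univ : Finset X) ×ˢ (Finset.univ : Finset X),
          ∑ α : A, ocfuC f p.1 p.2 α := by rw [Finset.univ_product_univ]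
    _ = ∑ p ∈ (Finset.univ : Finset X).diag ∪ (Finset.univ : Finset X).offDiag,
          ∑ α : A, ocfuC f p.1 p.2 α := by rw [Finset.diag_union_offDiag]
    _ = (∑ p ∈ (Finset.univ : Finset X).diag, ∑ α : A, ocfuC f p.1 p.2 α)
        + ∑ p ∈ (Finset.univ : Finset X).offDiag, ∑ α : A, ocfuC f p.1 p.2 α :=
        Finset.sum_union (Finset.disjoint_diag_offDiag _)
    _ = (∑ x : X, ∑ α : A, ocfuC f x x α)
        + ∑ p ∈ (Finset.univ : Finset X).offDiag, ∑ α : A, ocfuC f p.1 p.2 α := by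
        rw [Finset.sum_diag]

lemma ocfu_nat_endgame (a K m' c : ℕ) (ha : 2 ≤ a) (hK : 2 ≤ K) (hm' : 1 ≤ m')
    (h : (a * K - 1) * c = m' * (K - 1)) : a * K - 1 ≤ m' * (a - 1) := by
  set g := Nat.gcd (a * K - 1) (K - 1) with hg
  have hgpos : 0 < g := Nat.gcd_pos_of_pos_right _ (by omega)
  have hmulsub : a * (K - 1) + a = a * K := by
    have h1 : K - 1 + 1 = K := by omega
    calc a * (K - 1) + a = a * ((K - 1) + 1) := (Nat.mul_succ _ _).symm
      _ = a * K := by rw [h1]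
  have hga : g ∣ a - 1 := by
    have h1 : g ∣ a * K - 1 := Nat.gcd_dvd_left _ _
    have h2 : g ∣ K - 1 := Nat.gcd_dvd_right _ _
    have h3 : g ∣ a * (K - 1) := h2.mul_left a
    have h4 : (a * K - 1) - a * (K - 1) = a - 1 := by omega
    have h5 := Nat.dvd_sub h1 h3
    rwa [h4] at h5
  have hu : g * ((a * K - 1) / g) = a * K - 1 := Nat.mul_div_cancel' (Nat.gcd_dvd_left _ _)
  have hv : g * ((K - 1) / g) = K - 1 := Nat.mul_div_cancel' (Nat.gcd_dvd_right _ _)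
  have hcop : Nat.Coprime ((a * K - 1) / g) ((K - 1) / g) := Nat.coprime_div_gcd_div_gcd hgpos
  have hdvd : a * K - 1 ∣ m' * (K - 1) := ⟨c, h.symm⟩
  have hdvd2 : g * ((a * K - 1) / g) ∣ g * (m' * ((K - 1) / g)) := by
    rw [hu]
    have h5 : g * (m' * ((K - 1) / g)) = m' * (g * ((K - 1) / g)) := by ring
    rw [h5, hv]
    exact hdvd
  have hdvd3 : (a * K - 1) / g ∣ m' * ((K - 1) / g) :=
    (mul_dvd_mul_iff_left (by omega : g ≠ 0)).mp hdvd2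
  have hdvd4 : (a * K - 1) / g ∣ m' := hcop.dvd_of_dvd_mul_right hdvd3
  have hum : (a * K - 1) / g ≤ m' := Nat.le_of_dvd (by omega) hdvd4
  have hga' : g ≤ a - 1 := Nat.le_of_dvd (by omega) hga
  calc a * K - 1 = g * ((a * K - 1) / g) := hu.symm
    _ ≤ (a - 1) * m' := Nat.mul_le_mul hga' hum
    _ = m' * (a - 1) := Nat.mul_comm _ _


/-- Seed size lower bound for nontrivial OCFU hash functions:
|S|(|A| − 1) ≥ |A|(|X| − 1). -/
theorem ocfu_seed_size_lb {X S A : Type*} [Fintype X] [Fintype S] [Fintype A]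
    [Nonempty X] [Nonempty S] [Nonempty A] [DecidableEq A]
    (hA : 2 ≤ Fintype.card A) (hAX : Fintype.card A < Fintype.card X)
    (ε : ℝ)
    (hεopt : ε = ((Fintype.card X : ℝ) - (Fintype.card A : ℝ)) /
      ((Fintype.card A : ℝ) * ((Fintype.card X : ℝ) - 1)))
    (f : X × S → A)
    (hACFU1 : ∀ (x : X) (α : A),
      (Fintype.card A : ℝ) * ((Finset.univ.filter fun s : S => f (x, s) = α).card : ℝ)
        = (Fintype.card S : ℝ))
    (hACFU2 : ∀ (x x' : X), x ≠ x' → ∀ (α : A),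
      (Fintype.card A : ℝ) *
          ((Finset.univ.filter fun s : S => f (x, s) = α ∧ f (x', s) = α).card : ℝ)
        ≤ ε * (Fintype.card S : ℝ)) :
    (Fintype.card S : ℝ) * ((Fintype.card A : ℝ) - 1)
      ≥ (Fintype.card A : ℝ) * ((Fintype.card X : ℝ) - 1) := by
  classical
  set n := Fintype.card X with hn
  set a := Fintype.card A with ha
  set m := Fintype.card S with hm
  have hm1 : 1 ≤ m := Fintype.card_pos
  have hn3 : 3 ≤ n := by omega
  have haR : (0:ℝ) < a := by exact_mod_cast (by omega : 0 < a)
  have hnR1 : (1:ℝ) < n := by exact_mod_cast (by omega : 1 < n)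
  have hanR : (a:ℝ) < n := by exact_mod_cast hAX
  -- ACFU1, ℕ version
  have hACFU1' : ∀ (x : X) (α : A), (a : ℝ) * (ocfuF f x α : ℝ) = (m : ℝ) := fun x α =>
    hACFU1 x α
  have hfib : ∀ (x : X) (α : A), a * ocfuC f x x α = m := by
    intro x α
    rw [ocfuC_diag]
    exact_mod_cast hACFU1' x α
  -- diagonal sum
  have hdiagsum : a * (∑ x : X, ∑ α : A, ocfuC f x x α) = a * (n * m) := by
    calc a * (∑ x : X, ∑ α : A, ocfuC f x x α)
        = ∑ x : X, ∑ α : A, a * ocfuC f x x α := by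
          rw [Finset.mul_sum]; exact Finset.sum_congr rfl fun x _ => Finset.mul_sum _ _ _
      _ = ∑ _x : X, ∑ _α : A, m :=
          Finset.sum_congr rfl fun x _ => Finset.sum_congr rfl fun α _ => hfib x α
      _ = a * (n * m) := by
          simp only [Finset.sum_const, Finset.card_univ, smul_eq_mul, ← hn, ← ha]
          ring
  have hdiagsum' : (∑ x : X, ∑ α : A, ocfuC f x x α) = n * m :=
    Nat.eq_of_mul_eq_mul_left (by omega) hdiagsum
  have hOffEq : ∑ s : S, ∑ α : A, (ocfuK f s α) ^ 2
      = n * m + ∑ p ∈ (Finset.univ : Finset X).offDiag, ∑ α : A, ocfuC f p.1 p.2 α := by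
    rw [ocfu_double_count, ocfu_split, hdiagsum']
  -- real versions
  have hEeq : (a : ℝ) * ((n : ℝ) - 1) * (ε * m) = (m : ℝ) * ((n : ℝ) - (a : ℝ)) := by
    have h1 : ((n : ℝ) - 1) ≠ 0 := by linarith
    have h2 : ((a : ℝ)) ≠ 0 := by linarith
    rw [hεopt]
    field_simp
  have hOffR : (∑ s : S, ∑ α : A, ((ocfuK f s α : ℝ)) ^ 2)
      = (n : ℝ) * m
        + ∑ p ∈ (Finset.univ : Finset X).offDiag, ∑ α : A, ((ocfuC f p.1 p.2 α : ℝ)) := by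
    exact_mod_cast congrArg (Nat.cast : ℕ → ℝ) hOffEq
  -- per-seed sum-of-squares identity
  have hDval : ∀ s : S,
      (∑ α : A, ((a : ℝ) * (ocfuK f s α : ℝ) - (n : ℝ)) ^ 2)
        = (a : ℝ) ^ 2 * (∑ α : A, ((ocfuK f s α : ℝ)) ^ 2) - (a : ℝ) * (n : ℝ) ^ 2 := by
    intro s
    have hks : (∑ α : A, ((ocfuK f s α : ℝ))) = (n : ℝ) := by
      rw [← Nat.cast_sum, ocfuK_sum, ← hn]
    calc ∑ α : A, ((a : ℝ) * (ocfuK f s α : ℝ) - (n : ℝ)) ^ 2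
        = ∑ α : A, ((a : ℝ) ^ 2 * ((ocfuK f s α : ℝ)) ^ 2
            - 2 * (a : ℝ) * (n : ℝ) * (ocfuK f s α : ℝ) + (n : ℝ) ^ 2) :=
          Finset.sum_congr rfl fun α _ => by ring
      _ = ((a : ℝ) ^ 2 * (∑ α : A, ((ocfuK f s α : ℝ)) ^ 2)
            - 2 * (a : ℝ) * (n : ℝ) * (∑ α : A, ((ocfuK f s α : ℝ))))
            + (Fintype.card A : ℕ) • ((n : ℝ) ^ 2) := by
          rw [Finset.sum_add_distrib, Finset.sum_sub_distrib, ← Finset.mul_sum, ← Finset.mul_sum,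
            Finset.sum_const, Finset.card_univ]
      _ = (a : ℝ) ^ 2 * (∑ α : A, ((ocfuK f s α : ℝ)) ^ 2) - (a : ℝ) * (n : ℝ) ^ 2 := by
          rw [hks, nsmul_eq_mul, ← ha]; ring
  have hDsum : (∑ s : S, ∑ α : A, ((a : ℝ) * (ocfuK f s α : ℝ) - (n : ℝ)) ^ 2)
      = (a : ℝ) ^ 2 * (∑ s : S, ∑ α : A, ((ocfuK f s α : ℝ)) ^ 2)
        - (a : ℝ) * (n : ℝ) ^ 2 * m := by
    calc ∑ s : S, ∑ α : A, ((a : ℝ) * (ocfuK f s α : ℝ) - (n : ℝ)) ^ 2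
        = ∑ s : S, ((a : ℝ) ^ 2 * (∑ α : A, ((ocfuK f s α : ℝ)) ^ 2)
            - (a : ℝ) * (n : ℝ) ^ 2) := Finset.sum_congr rfl fun s _ => hDval s
      _ = (a : ℝ) ^ 2 * (∑ s : S, ∑ α : A, ((ocfuK f s α : ℝ)) ^ 2)
            - (Fintype.card S : ℕ) • ((a : ℝ) * (n : ℝ) ^ 2) := by
          rw [Finset.sum_sub_distrib, ← Finset.mul_sum, Finset.sum_const, Finset.card_univ]
      _ = (a : ℝ) ^ 2 * (∑ s : S, ∑ α : A, ((ocfuK f s α : ℝ)) ^ 2)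
            - (a : ℝ) * (n : ℝ) ^ 2 * m := by
          rw [nsmul_eq_mul, ← hm]; ring
  have hcardOff : (((Finset.univ : Finset X).offDiag.card : ℝ)) = (n : ℝ) * n - n := by
    have hle : n ≤ n * n := Nat.le_mul_of_pos_left n (by omega)
    rw [Finset.offDiag_card, Finset.card_univ, ← hn]
    push_cast [Nat.cast_sub hle]
    ring
  have hGsum : (∑ p ∈ (Finset.univ : Finset X).offDiag,
        ∑ α : A, (ε * m - (a : ℝ) * (ocfuC f p.1 p.2 α : ℝ)))
      = ((n : ℝ) * n - n) * ((a : ℝ) * (ε * m))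
        - (a : ℝ) * ∑ p ∈ (Finset.univ : Finset X).offDiag,
            ∑ α : A, ((ocfuC f p.1 p.2 α : ℝ)) := by
    calc ∑ p ∈ (Finset.univ : Finset X).offDiag,
          ∑ α : A, (ε * m - (a : ℝ) * (ocfuC f p.1 p.2 α : ℝ))
        = ∑ p ∈ (Finset.univ : Finset X).offDiag,
            ((Fintype.card A : ℕ) • (ε * m)
              - (a : ℝ) * ∑ α : A, ((ocfuC f p.1 p.2 α : ℝ))) := by
          refine Finset.sum_congr rfl fun p _ => ?_
          rw [Finset.sum_sub_distrib, Finset.sum_const, Finset.card_univ, ← Finset.mul_sum]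
      _ = ((Finset.univ : Finset X).offDiag.card : ℝ) * ((Fintype.card A : ℕ) • (ε * m))
            - (a : ℝ) * ∑ p ∈ (Finset.univ : Finset X).offDiag,
                ∑ α : A, ((ocfuC f p.1 p.2 α : ℝ)) := by
          rw [Finset.sum_sub_distrib, Finset.sum_const, ← Finset.mul_sum, nsmul_eq_mul]
      _ = ((n : ℝ) * n - n) * ((a : ℝ) * (ε * m))
            - (a : ℝ) * ∑ p ∈ (Finset.univ : Finset X).offDiag,
                ∑ α : A, ((ocfuC f p.1 p.2 α : ℝ)) := by
          rw [hcardOff, nsmul_eq_mul, ← ha]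
  -- key identity: sum of nonnegative quantities vanishes
  have hkey : (∑ s : S, ∑ α : A, ((a : ℝ) * (ocfuK f s α : ℝ) - (n : ℝ)) ^ 2)
      + (a : ℝ) * (∑ p ∈ (Finset.univ : Finset X).offDiag,
          ∑ α : A, (ε * m - (a : ℝ) * (ocfuC f p.1 p.2 α : ℝ))) = 0 := by
    rw [hDsum, hGsum, hOffR]
    linear_combination ((a : ℝ) * (n : ℝ)) * hEeq
  have hDnn : ∀ s ∈ (Finset.univ : Finset S),
      0 ≤ ∑ α : A, ((a : ℝ) * (ocfuK f s α : ℝ) - (n : ℝ)) ^ 2 := fun s _ =>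
    Finset.sum_nonneg fun α _ => sq_nonneg _
  have hGnn : ∀ p ∈ (Finset.univ : Finset X).offDiag,
      0 ≤ ∑ α : A, (ε * m - (a : ℝ) * (ocfuC f p.1 p.2 α : ℝ)) := by
    intro p hp
    have hne : p.1 ≠ p.2 := (Finset.mem_offDiag.mp hp).2.2
    exact Finset.sum_nonneg fun α _ => sub_nonneg.mpr (hACFU2 p.1 p.2 hne α)
  have hDS : 0 ≤ ∑ s : S, ∑ α : A, ((a : ℝ) * (ocfuK f s α : ℝ) - (n : ℝ)) ^ 2 :=
    Finset.sum_nonneg hDnn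
  have hGS : 0 ≤ ∑ p ∈ (Finset.univ : Finset X).offDiag,
      ∑ α : A, (ε * m - (a : ℝ) * (ocfuC f p.1 p.2 α : ℝ)) := Finset.sum_nonneg hGnn
  have hDzero : (∑ s : S, ∑ α : A, ((a : ℝ) * (ocfuK f s α : ℝ) - (n : ℝ)) ^ 2) = 0 := by
    nlinarith [mul_nonneg haR.le hGS]
  have hGzero : (∑ p ∈ (Finset.univ : Finset X).offDiag,
      ∑ α : A, (ε * m - (a : ℝ) * (ocfuC f p.1 p.2 α : ℝ))) = 0 := by
    have h3 : (a : ℝ) * (∑ p ∈ (Finset.univ : Finset X).offDiag,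
        ∑ α : A, (ε * m - (a : ℝ) * (ocfuC f p.1 p.2 α : ℝ))) = 0 := by linarith
    rcases mul_eq_zero.mp h3 with h4 | h4
    · exact absurd h4 (ne_of_gt haR)
    · exact h4
  -- all fibers of f(·,s) have the same size, hence a ∣ n
  have hkeq : ∀ (s : S) (α : A), a * ocfuK f s α = n := by
    intro s α
    have hs1 : (∑ α : A, ((a : ℝ) * (ocfuK f s α : ℝ) - (n : ℝ)) ^ 2) = 0 :=
      (Finset.sum_eq_zero_iff_of_nonneg hDnn).mp hDzero s (Finset.mem_univ s)
    have hs2 : ((a : ℝ) * (ocfuK f s α : ℝ) - (n : ℝ)) ^ 2 = 0 :=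
      (Finset.sum_eq_zero_iff_of_nonneg (fun α _ => sq_nonneg _)).mp hs1 α (Finset.mem_univ α)
    have hs3 : (a : ℝ) * (ocfuK f s α : ℝ) = (n : ℝ) := by
      have h5 := sq_eq_zero_iff.mp hs2
      linarith
    exact_mod_cast hs3
  obtain ⟨x1, x2, hx12⟩ := Fintype.exists_pair_of_one_lt_card (show 1 < Fintype.card X by omega)
  obtain ⟨s0⟩ := (inferInstance : Nonempty S)
  obtain ⟨α0⟩ := (inferInstance : Nonempty A)
  have hK : a * ocfuK f s0 α0 = n := hkeq s0 α0
  have hK2 : 2 ≤ ocfuK f s0 α0 := by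
    rcases Nat.lt_or_ge (ocfuK f s0 α0) 2 with hlt | hge
    · exfalso
      have h9 : a * ocfuK f s0 α0 ≤ a * 1 := Nat.mul_le_mul_left a (by omega)
      rw [Nat.mul_one] at h9
      omega
    · exact hge
  -- off-diagonal collision counts: a·c = ε·m
  have hmem : (x1, x2) ∈ (Finset.univ : Finset X).offDiag :=
    Finset.mem_offDiag.mpr ⟨Finset.mem_univ _, Finset.mem_univ _, hx12⟩
  have hGp1 : (∑ α : A, (ε * m - (a : ℝ) * (ocfuC f x1 x2 α : ℝ))) = 0 := by
    have h8 := (Finset.sum_eq_zero_iff_of_nonneg hGnn).mp hGzero (x1, x2) hmem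
    simpa using h8
  have hGterm : ∀ α ∈ (Finset.univ : Finset A),
      0 ≤ ε * m - (a : ℝ) * (ocfuC f x1 x2 α : ℝ) := fun α _ =>
    sub_nonneg.mpr (hACFU2 x1 x2 hx12 α)
  have hceq : (a : ℝ) * (ocfuC f x1 x2 α0 : ℝ) = ε * m := by
    have h6 := (Finset.sum_eq_zero_iff_of_nonneg hGterm).mp hGp1 α0 (Finset.mem_univ α0)
    linarith [sub_eq_zero.mp h6]
  -- integrality: a·a·(n−1)·c = m·(n−a)
  have hnatEq : a * (a * ((n - 1) * ocfuC f x1 x2 α0)) = m * (n - a) := by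
    have hR : (a : ℝ) * ((a : ℝ) * ((((n - 1 : ℕ)) : ℝ) * (ocfuC f x1 x2 α0 : ℝ)))
        = (m : ℝ) * (((n - a : ℕ)) : ℝ) := by
      push_cast [Nat.cast_sub (by omega : 1 ≤ n), Nat.cast_sub (by omega : a ≤ n)]
      linear_combination hEeq + ((a : ℝ) * ((n : ℝ) - 1)) * hceq
    exact_mod_cast hR
  -- reduce to (n−1)·c = m'·(K−1)
  have hfib' : a * ocfuC f x1 x1 α0 = m := hfib x1 α0
  have hm'1 : 1 ≤ ocfuC f x1 x1 α0 := by
    rcases Nat.eq_zero_or_pos (ocfuC f x1 x1 α0) with h0 | h0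
    · rw [h0, Nat.mul_zero] at hfib'; omega
    · omega
  have hsub1 : a * (ocfuK f s0 α0 - 1) + a = a * ocfuK f s0 α0 := by
    have h1 : ocfuK f s0 α0 - 1 + 1 = ocfuK f s0 α0 := by omega
    calc a * (ocfuK f s0 α0 - 1) + a = a * ((ocfuK f s0 α0 - 1) + 1) := (Nat.mul_succ _ _).symm
      _ = a * ocfuK f s0 α0 := by rw [h1]
  have hna : n - a = a * (ocfuK f s0 α0 - 1) := by omega
  have hredEq : (n - 1) * ocfuC f x1 x2 α0
      = ocfuC f x1 x1 α0 * (ocfuK f s0 α0 - 1) := by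
    have h5 : a * (a * ((n - 1) * ocfuC f x1 x2 α0))
        = a * (a * (ocfuC f x1 x1 α0 * (ocfuK f s0 α0 - 1))) := by
      rw [hnatEq, ← hfib', hna]; ring
    exact Nat.eq_of_mul_eq_mul_left (by omega) (Nat.eq_of_mul_eq_mul_left (by omega) h5)
  have hredEq' : (a * ocfuK f s0 α0 - 1) * ocfuC f x1 x2 α0
      = ocfuC f x1 x1 α0 * (ocfuK f s0 α0 - 1) := by
    have h7 : a * ocfuK f s0 α0 - 1 = n - 1 := by omega
    rw [h7]; exact hredEq
  have hend := ocfu_nat_endgame a (ocfuK f s0 α0) (ocfuC f x1 x1 α0) (ocfuC f x1 x2 α0)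
    hA hK2 hm'1 hredEq'
  -- conclude
  have hfinalN : a * (n - 1) ≤ m * (a - 1) := by
    have h6 : a * ocfuK f s0 α0 - 1 = n - 1 := by omega
    rw [h6] at hend
    calc a * (n - 1) ≤ a * (ocfuC f x1 x1 α0 * (a - 1)) := Nat.mul_le_mul_left a hend
      _ = (a * ocfuC f x1 x1 α0) * (a - 1) := by ring
      _ = m * (a - 1) := by rw [hfib']
  have hRfin := (Nat.cast_le (α := ℝ)).mpr hfinalN
  push_cast [Nat.cast_sub (by omega : 1 ≤ n), Nat.cast_sub (by omega : 1 ≤ a)] at hRfin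
  linarith
end

section
/- Let Y, S, A be finite nonempty sets, let ε ≥ 0 be real, let ∘ : A × A → A be a quasigroup operation (for every β ∈ A the map γ ↦ γ ∘ β is a bijection of A, and for every α ∈ A the map β ↦ α ∘ β is a bijection of A), let g : Y × S → A, and define the point extension ǧ : (Y × A) × S → A by ǧ((y, β), s) = g(y,s) ∘ β. Then g is an ε-almost strongly universal (ε-ASU) hash function if and only if ǧ is an ε-almost collision-flat universal (ε-ACFU) hash function. -/
/-- g is an ε-ASU hash function iff its point extension
ǧ((y, β), s) = g(y,s) ∘ β (with ∘ a quasigroup operation) is an ε-ACFU hash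
function. -/
theorem point_extension_asu_iff_acfu {Y S A : Type*} [Fintype Y] [Fintype S] [Fintype A]
    [Nonempty Y] [Nonempty S] [Nonempty A] [DecidableEq Y] [DecidableEq A]
    (ε : ℝ) (hε : 0 ≤ ε)
    (op : A → A → A)
    (hopr : ∀ β : A, Function.Bijective fun γ : A => op γ β)
    (hopl : ∀ α : A, Function.Bijective fun β : A => op α β)
    (g : Y × S → A) (gcheck : (Y × A) × S → A)
    (hgcheck : ∀ (y : Y) (β : A) (s : S), gcheck ((y, β), s) = op (g (y, s)) β) :
    ((∀ (y : Y) (α : A),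
      (Fintype.card A : ℝ) * ((Finset.univ.filter fun s : S => g (y, s) = α).card : ℝ)
        = (Fintype.card S : ℝ)) ∧
    (∀ (y y' : Y), y ≠ y' → ∀ (α α' : A),
      (Fintype.card A : ℝ) *
          ((Finset.univ.filter fun s : S => g (y, s) = α ∧ g (y', s) = α').card : ℝ)
        ≤ ε * (Fintype.card S : ℝ)))
    ↔
    ((∀ (p : Y × A) (α : A),
      (Fintype.card A : ℝ) * ((Finset.univ.filter fun s : S => gcheck (p, s) = α).card : ℝ)
        = (Fintype.card S : ℝ)) ∧
    (∀ (p p' : Y × A), p ≠ p' → ∀ (α : A),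
      (Fintype.card A : ℝ) *
          ((Finset.univ.filter fun s : S => gcheck (p, s) = α ∧ gcheck (p', s) = α).card : ℝ)
        ≤ ε * (Fintype.card S : ℝ))) := by
  constructor
  · rintro ⟨h1, h2⟩
    constructor
    · rintro ⟨y, β⟩ α
      obtain ⟨γ, hγ⟩ := (hopr β).2 α
      have heq : (Finset.univ.filter fun s : S => gcheck ((y, β), s) = α)
          = (Finset.univ.filter fun s : S => g (y, s) = γ) := by
        apply Finset.filter_congr
        intro s _
        rw [hgcheck]
        constructor
        · intro h
          exact (hopr β).1 (show op (g (y, s)) β = op γ β from h.trans hγ.symm)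
        · intro h; rw [h]; exact hγ
      rw [heq]; exact h1 y γ
    · rintro ⟨y, β⟩ ⟨y', β'⟩ hne α
      by_cases hyy : y = y'
      · subst hyy
        have hββ : β ≠ β' := fun h => hne (by rw [h])
        have heq : (Finset.univ.filter fun s : S =>
            gcheck ((y, β), s) = α ∧ gcheck ((y, β'), s) = α) = ∅ := by
          apply Finset.filter_false_of_mem
          rintro s _ ⟨ha, hb⟩
          rw [hgcheck] at ha hb
          exact hββ ((hopl (g (y, s))).1
            (show op (g (y, s)) β = op (g (y, s)) β' from ha.trans hb.symm))
        rw [heq]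
        simp only [Finset.card_empty, Nat.cast_zero, mul_zero]
        positivity
      · obtain ⟨γ, hγ⟩ := (hopr β).2 α
        obtain ⟨γ', hγ'⟩ := (hopr β').2 α
        have heq : (Finset.univ.filter fun s : S =>
            gcheck ((y, β), s) = α ∧ gcheck ((y', β'), s) = α)
            = (Finset.univ.filter fun s : S => g (y, s) = γ ∧ g (y', s) = γ') := by
          apply Finset.filter_congr
          intro s _
          rw [hgcheck, hgcheck]
          constructor
          · rintro ⟨ha, hb⟩
            exact ⟨(hopr β).1 (show op (g (y, s)) β = op γ β from ha.trans hγ.symm),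
              (hopr β').1 (show op (g (y', s)) β' = op γ' β' from hb.trans hγ'.symm)⟩
          · rintro ⟨ha, hb⟩
            rw [ha, hb]; exact ⟨hγ, hγ'⟩
        rw [heq]; exact h2 y y' hyy γ γ'
  · rintro ⟨h1, h2⟩
    have β₀ : A := Classical.arbitrary A
    constructor
    · intro y α
      have heq : (Finset.univ.filter fun s : S => g (y, s) = α)
          = (Finset.univ.filter fun s : S => gcheck ((y, β₀), s) = op α β₀) := by
        apply Finset.filter_congr
        intro s _
        rw [hgcheck]
        constructor
        · intro h; rw [h]
        · intro h; exact (hopr β₀).1 (show op (g (y, s)) β₀ = op α β₀ from h)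
      rw [heq]; exact h1 (y, β₀) (op α β₀)
    · intro y y' hyy α α'
      obtain ⟨β', hβ'⟩ := (hopl α').2 (op α β₀)
      have hne : (y, β₀) ≠ (y', β') := fun h => hyy (congrArg Prod.fst h)
      have heq : (Finset.univ.filter fun s : S => g (y, s) = α ∧ g (y', s) = α')
          = (Finset.univ.filter fun s : S =>
              gcheck ((y, β₀), s) = op α β₀ ∧ gcheck ((y', β'), s) = op α β₀) := by
        apply Finset.filter_congr
        intro s _
        rw [hgcheck, hgcheck]
        constructor
        · rintro ⟨ha, hb⟩
          rw [ha, hb]; exact ⟨rfl, hβ'⟩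
        · rintro ⟨ha, hb⟩
          refine ⟨(hopr β₀).1 (show op (g (y, s)) β₀ = op α β₀ from ha), ?_⟩
          exact (hopr β').1
            (show op (g (y', s)) β' = op α' β' from hb.trans hβ'.symm)
      rw [heq]; exact h2 (y, β₀) (y', β') hne (op α β₀)
end

section
/- Let Y, H be finite nonempty sets, let A be a finite (additive) abelian group, let ε ≥ 0 be real, and let f : (Y × A) × (H × A) → A be an ε-almost collision-flat universal (ε-ACFU) hash function. Then the following are equivalent: (1) there exist an ε-almost universal hash function g₁ : (Y × A) × H → A with f((y,β),(h,γ)) = g₁((y,β), h) + γ for all y, β, h, γ, and an ε-almost strongly universal hash function g₂ : Y × (H × A) → A with f((y,β),(h,γ)) = g₂(y,(h,γ)) + β for all y, β, h, γ; (2) there exists an ε-balanced function a : Y × H → A such that f((y,β),(h,γ)) = a(y,h) + β + γ for all y, β, h, γ. -/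
/-- An ε-ACFU hash function f on (Y × A) × (H × A) is simultaneously
a seed extension of an ε-AU hash function and a point extension of an ε-ASU hash
function (w.r.t. the abelian group structure of A) iff it has the form
f((y,β),(h,γ)) = a(y,h) + β + γ for an ε-balanced function a. -/
theorem seed_and_point_extension_iff_balanced {Y H A : Type*}
    [Fintype Y] [Fintype H] [Fintype A]
    [Nonempty Y] [Nonempty H] [AddCommGroup A] [DecidableEq Y] [DecidableEq A]
    (ε : ℝ) (hε : 0 ≤ ε)
    (f : (Y × A) × (H × A) → A)
    (hACFU1 : ∀ (p : Y × A) (α : A),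
      (Fintype.card A : ℝ) *
          ((Finset.univ.filter fun t : H × A => f (p, t) = α).card : ℝ)
        = (Fintype.card (H × A) : ℝ))
    (hACFU2 : ∀ (p p' : Y × A), p ≠ p' → ∀ (α : A),
      (Fintype.card A : ℝ) *
          ((Finset.univ.filter fun t : H × A => f (p, t) = α ∧ f (p', t) = α).card : ℝ)
        ≤ ε * (Fintype.card (H × A) : ℝ)) :
    ((∃ g₁ : (Y × A) × H → A,
        (∀ (p p' : Y × A), p ≠ p' →
          ((Finset.univ.filter fun h : H => g₁ (p, h) = g₁ (p', h)).card : ℝ)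
            ≤ ε * (Fintype.card H : ℝ)) ∧
        (∀ (y : Y) (β : A) (h : H) (γ : A),
          f ((y, β), (h, γ)) = g₁ ((y, β), h) + γ)) ∧
     (∃ g₂ : Y × (H × A) → A,
        (∀ (y : Y) (α : A),
          (Fintype.card A : ℝ) *
              ((Finset.univ.filter fun t : H × A => g₂ (y, t) = α).card : ℝ)
            = (Fintype.card (H × A) : ℝ)) ∧
        (∀ (y y' : Y), y ≠ y' → ∀ (α α' : A),
          (Fintype.card A : ℝ) *
              ((Finset.univ.filter fun t : H × A => g₂ (y, t) = α ∧ g₂ (y', t) = α').card : ℝ)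
            ≤ ε * (Fintype.card (H × A) : ℝ)) ∧
        (∀ (y : Y) (β : A) (h : H) (γ : A),
          f ((y, β), (h, γ)) = g₂ (y, (h, γ)) + β)))
    ↔
    (∃ a : Y × H → A,
      (∀ (y y' : Y), y ≠ y' → ∀ β : A,
        ((Finset.univ.filter fun h : H => a (y, h) - a (y', h) = β).card : ℝ)
          ≤ ε * (Fintype.card H : ℝ)) ∧
      (∀ (y : Y) (β : A) (h : H) (γ : A),
        f ((y, β), (h, γ)) = a (y, h) + β + γ)) := by
  classical
  constructor
  · rintro ⟨⟨g₁, hAU, hg₁⟩, ⟨g₂, _, _, hg₂⟩⟩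
    refine ⟨fun p => f ((p.1, 0), (p.2, 0)), ?_, ?_⟩
    · intro y y' hyy' β
      have key : (Finset.univ.filter fun h : H =>
          f ((y, 0), (h, 0)) - f ((y', 0), (h, 0)) = β)
          = Finset.univ.filter fun h : H => g₁ ((y, 0), h) = g₁ ((y', β), h) := by
        ext h
        simp only [Finset.mem_filter, Finset.mem_univ, true_and]
        have e1 : f ((y, 0), (h, 0)) = g₁ ((y, 0), h) := by
          rw [hg₁]; abel
        have e2 : f ((y', 0), (h, 0)) = g₁ ((y', 0), h) := by
          rw [hg₁]; abel
        have e3 : g₁ ((y', β), h) = g₁ ((y', 0), h) + β := by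
          have a1 : f ((y', β), (h, 0)) = g₁ ((y', β), h) := by rw [hg₁]; abel
          have b : f ((y', 0), (h, 0)) = g₂ (y', (h, 0)) := by rw [hg₂]; abel
          have a2 : f ((y', β), (h, 0)) = g₁ ((y', 0), h) + β := by
            rw [hg₂, ← b, e2]
          rw [← a1, a2]
        rw [e1, e2, e3, sub_eq_iff_eq_add, add_comm β]
      rw [key]
      exact hAU (y, 0) (y', β) (by simp [Prod.ext_iff, hyy']) 
    · intro y β h γ
      have e1 : f ((y, β), (h, γ)) = f ((y, 0), (h, γ)) + β := by
        rw [hg₂, hg₂ y 0]; abel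
      have e2 : f ((y, 0), (h, γ)) = f ((y, 0), (h, 0)) + γ := by
        rw [hg₁, hg₁ y 0 h 0]; abel
      rw [e1, e2]; abel
  · rintro ⟨a, hbal, ha⟩
    constructor
    · refine ⟨fun p => a (p.1.1, p.2) + p.1.2, ?_, ?_⟩
      · rintro ⟨y, β⟩ ⟨y', β'⟩ hne
        by_cases hyy' : y = y'
        · subst hyy'
          have hββ' : β ≠ β' := by
            intro e; exact hne (by rw [e])
          have : (Finset.univ.filter fun h : H =>
              a ((y, β).1, h) + (y, β).2 = a ((y, β').1, h) + (y, β').2) = ∅ := by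
            rw [Finset.filter_eq_empty_iff]
            intro h _
            exact fun e => hββ' (add_left_cancel e)
          rw [this]
          simp only [Finset.card_empty, Nat.cast_zero]
          positivity
        · have key : (Finset.univ.filter fun h : H =>
              a ((y, β).1, h) + (y, β).2 = a ((y', β').1, h) + (y', β').2)
              = Finset.univ.filter fun h : H => a (y, h) - a (y', h) = β' - β := by
            ext h
            simp only [Finset.mem_filter, Finset.mem_univ, true_and]
            rw [sub_eq_sub_iff_add_eq_add, add_comm β' (a (y', h))]
          rw [key]
          exact hbal y y' hyy' (β' - β)
      · intro y β h γ
        rw [ha]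
    · refine ⟨fun p => a (p.1, p.2.1) + p.2.2, ?_, ?_, ?_⟩
      · intro y α
        have key : (Finset.univ.filter fun t : H × A => a (y, t.1) + t.2 = α)
            = Finset.univ.image (fun h : H => (h, α - a (y, h))) := by
          ext t
          simp only [Finset.mem_filter, Finset.mem_univ, true_and, Finset.mem_image,
            Prod.ext_iff]
          constructor
          · intro e
            exact ⟨t.1, rfl, by rw [← e]; abel⟩
          · rintro ⟨h, rfl, hh⟩
            rw [← hh]; abel
        have hinj : Function.Injective (fun h : H => (h, α - a (y, h))) :=
          fun h1 h2 e => congrArg Prod.fst e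
        rw [key, Finset.card_image_of_injective _ hinj, Finset.card_univ,
          Fintype.card_prod]
        push_cast
        ring
      · intro y y' hyy' α α'
        have key : (Finset.univ.filter fun t : H × A =>
            a (y, t.1) + t.2 = α ∧ a (y', t.1) + t.2 = α')
            = (Finset.univ.filter fun h : H => a (y, h) - a (y', h) = α - α').image
              (fun h : H => (h, α - a (y, h))) := by
          ext t
          simp only [Finset.mem_filter, Finset.mem_univ, true_and, Finset.mem_image,
            Prod.ext_iff]
          constructor
          · rintro ⟨h1, h2⟩
            exact ⟨t.1, by rw [← h1, ← h2]; abel, rfl, by rw [← h1]; abel⟩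
          · rintro ⟨h, hd, rfl, hh⟩
            refine ⟨by rw [← hh]; abel, ?_⟩
            have hα' : α' = α - (a (y, t.1) - a (y', t.1)) := by rw [hd]; abel
            rw [← hh, hα']; abel
        have hinj : Function.Injective (fun h : H => (h, α - a (y, h))) :=
          fun h1 h2 e => congrArg Prod.fst e
        rw [key, Finset.card_image_of_injective _ hinj]
        have := hbal y y' hyy' (α - α')
        rw [Fintype.card_prod]
        push_cast
        nlinarith [Nat.cast_nonneg (α := ℝ) (Fintype.card A),
          Nat.cast_nonneg (α := ℝ)
            (Finset.univ.filter fun h : H => a (y, h) - a (y', h) = α - α').card]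
      · intro y β h γ
        rw [ha]; show _ = a (y, h) + γ + β; abel
end

section
/- Let X₁, S₁, A₁, S₂, A₂ be finite nonempty sets and ε₁, ε₂ ≥ 0 real numbers. If f₁ : X₁ × S₁ → A₁ is an ε₁-almost strongly universal (ε₁-ASU) hash function and f₂ : A₁ × S₂ → A₂ is an ε₂-almost collision-flat universal (ε₂-ACFU) hash function, then the function f : X₁ × (S₁ × S₂) → A₂ defined by f(x₁, (s₁, s₂)) = f₂(f₁(x₁, s₁), s₂) is an ε-almost collision-flat universal hash function with ε = ε₁·ε₂·(|A₁| − 1) + ε₁. -/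
open Finset

lemma card_filter_prod_sum {α β : Type*} [Fintype α] [Fintype β]
    (p : α → β → Prop) [∀ a b, Decidable (p a b)] :
    (Finset.univ.filter fun t : α × β => p t.1 t.2).card
      = ∑ a : α, (Finset.univ.filter fun b => p a b).card := by
  rw [Finset.card_filter, Fintype.sum_prod_type]
  exact Finset.sum_congr rfl fun a _ => (Finset.card_filter _ _).symm

lemma card_eq_fiber_sum {S A : Type*} [Fintype S] [Fintype A] [DecidableEq A]
    (g h : S → A) :
    (Finset.univ.filter fun s => g s = h s).card
      = ∑ a : A, (Finset.univ.filter fun s => g s = a ∧ h s = a).card := by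
  simp only [Finset.card_filter]
  rw [Finset.sum_comm]
  refine Finset.sum_congr rfl fun s _ => ?_
  by_cases hgh : g s = h s
  · rw [Finset.sum_eq_single (g s)]
    · rw [if_pos hgh, if_pos ⟨rfl, hgh.symm⟩]
    · intro b _ hb
      rw [if_neg]
      rintro ⟨h1, _⟩
      exact hb h1.symm
    · simp
  · rw [if_neg hgh]
    refine (Finset.sum_eq_zero fun a _ => ?_).symm
    rw [if_neg]
    rintro ⟨h1, h2⟩
    exact hgh (h1.trans h2.symm)

lemma card_ne_fiber_sum {S A : Type*} [Fintype S] [Fintype A] [DecidableEq A]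
    (g h : S → A) :
    (Finset.univ.filter fun s => ¬ g s = h s).card
      = ∑ a : A, ∑ a' : A,
          if a ≠ a' then (Finset.univ.filter fun s => g s = a ∧ h s = a').card else 0 := by
  simp only [Finset.card_filter]
  have key : ∀ (a a' : A), (if a ≠ a' then ∑ s : S, (if g s = a ∧ h s = a' then 1 else 0) else 0)
      = ∑ s : S, if a ≠ a' ∧ (g s = a ∧ h s = a') then 1 else 0 := by
    intro a a'
    by_cases hc : a ≠ a' <;> simp [hc]
  refine Eq.symm ?_
  calc (∑ a : A, ∑ a' : A,
          if a ≠ a' then ∑ s : S, (if g s = a ∧ h s = a' then 1 else 0) else 0)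
      = ∑ a : A, ∑ a' : A, ∑ s : S, (if a ≠ a' ∧ (g s = a ∧ h s = a') then 1 else 0) := by
        exact Finset.sum_congr rfl fun a _ => Finset.sum_congr rfl fun a' _ => key a a'
    _ = ∑ a : A, ∑ s : S, ∑ a' : A, (if a ≠ a' ∧ (g s = a ∧ h s = a') then 1 else 0) :=
        Finset.sum_congr rfl fun a _ => Finset.sum_comm
    _ = ∑ s : S, ∑ a : A, ∑ a' : A, (if a ≠ a' ∧ (g s = a ∧ h s = a') then 1 else 0) :=
        Finset.sum_comm
    _ = ∑ s : S, (if ¬ g s = h s then 1 else 0) := by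
        refine Finset.sum_congr rfl fun s _ => ?_
        by_cases hgh : g s = h s
        · rw [if_neg (by simp [hgh])]
          refine Finset.sum_eq_zero fun a _ => Finset.sum_eq_zero fun a' _ => ?_
          rw [if_neg]
          rintro ⟨hne, h1, h2⟩
          exact hne (h1.symm.trans (hgh.trans h2))
        · rw [if_pos hgh]
          rw [Finset.sum_eq_single (g s)]
          · rw [Finset.sum_eq_single (h s)]
            · rw [if_pos ⟨hgh, rfl, rfl⟩]
            · intro b _ hb
              rw [if_neg]
              rintro ⟨_, _, h2⟩
              exact hb h2.symm
            · simp
          · intro b _ hb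
            refine Finset.sum_eq_zero fun a' _ => ?_
            rw [if_neg]
            rintro ⟨_, h1, _⟩
            exact hb h1.symm
          · simp


/-- Concatenation of an ε₁-ASU hash function with an ε₂-ACFU hash
function yields an (ε₁ε₂(|A₁| − 1) + ε₁)-ACFU hash function. -/
theorem concat_asu_acfu {X₁ S₁ A₁ S₂ A₂ : Type*}
    [Fintype X₁] [Fintype S₁] [Fintype A₁] [Fintype S₂] [Fintype A₂]
    [Nonempty X₁] [Nonempty S₁] [Nonempty A₁] [Nonempty S₂] [Nonempty A₂]
    [DecidableEq A₁] [DecidableEq A₂]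
    (ε₁ ε₂ : ℝ) (hε₁ : 0 ≤ ε₁) (hε₂ : 0 ≤ ε₂)
    (f₁ : X₁ × S₁ → A₁) (f₂ : A₁ × S₂ → A₂)
    (hASU1 : ∀ (x : X₁) (α : A₁),
      (Fintype.card A₁ : ℝ) * ((Finset.univ.filter fun s : S₁ => f₁ (x, s) = α).card : ℝ)
        = (Fintype.card S₁ : ℝ))
    (hASU2 : ∀ (x x' : X₁), x ≠ x' → ∀ (α α' : A₁),
      (Fintype.card A₁ : ℝ) *
          ((Finset.univ.filter fun s : S₁ => f₁ (x, s) = α ∧ f₁ (x', s) = α').card : ℝ)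
        ≤ ε₁ * (Fintype.card S₁ : ℝ))
    (hACFU1 : ∀ (a : A₁) (α : A₂),
      (Fintype.card A₂ : ℝ) * ((Finset.univ.filter fun s : S₂ => f₂ (a, s) = α).card : ℝ)
        = (Fintype.card S₂ : ℝ))
    (hACFU2 : ∀ (a a' : A₁), a ≠ a' → ∀ (α : A₂),
      (Fintype.card A₂ : ℝ) *
          ((Finset.univ.filter fun s : S₂ => f₂ (a, s) = α ∧ f₂ (a', s) = α).card : ℝ)
        ≤ ε₂ * (Fintype.card S₂ : ℝ)) :
    (∀ (x : X₁) (α : A₂),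
      (Fintype.card A₂ : ℝ) *
          ((Finset.univ.filter fun t : S₁ × S₂ => f₂ (f₁ (x, t.1), t.2) = α).card : ℝ)
        = (Fintype.card (S₁ × S₂) : ℝ)) ∧
    (∀ (x x' : X₁), x ≠ x' → ∀ (α : A₂),
      (Fintype.card A₂ : ℝ) *
          ((Finset.univ.filter fun t : S₁ × S₂ =>
              f₂ (f₁ (x, t.1), t.2) = α ∧ f₂ (f₁ (x', t.1), t.2) = α).card : ℝ)
        ≤ (ε₁ * ε₂ * ((Fintype.card A₁ : ℝ) - 1) + ε₁) * (Fintype.card (S₁ × S₂) : ℝ)) := by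
  have hA₁pos : (0 : ℝ) < (Fintype.card A₁ : ℝ) := by
    exact_mod_cast Fintype.card_pos
  constructor
  · intro x α
    rw [card_filter_prod_sum (p := fun s₁ s₂ => f₂ (f₁ (x, s₁), s₂) = α)]
    push_cast
    rw [Finset.mul_sum]
    rw [Finset.sum_congr rfl fun s₁ _ => hACFU1 (f₁ (x, s₁)) α]
    simp [Finset.card_univ, Fintype.card_prod]
  · intro x x' hxx' α
    rw [card_filter_prod_sum
      (p := fun s₁ s₂ => f₂ (f₁ (x, s₁), s₂) = α ∧ f₂ (f₁ (x', s₁), s₂) = α)]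
    push_cast
    rw [Finset.mul_sum]
    rw [← Finset.sum_filter_add_sum_filter_not Finset.univ
      (fun s₁ => f₁ (x, s₁) = f₁ (x', s₁))]
    set E := Finset.univ.filter fun s₁ : S₁ => f₁ (x, s₁) = f₁ (x', s₁) with hEdef
    set N := Finset.univ.filter fun s₁ : S₁ => ¬ f₁ (x, s₁) = f₁ (x', s₁) with hNdef
    -- first sum equals E.card * |S₂|
    have h1 : ∑ s₁ ∈ E, (Fintype.card A₂ : ℝ) *
        ((Finset.univ.filter fun s₂ : S₂ =>
          f₂ (f₁ (x, s₁), s₂) = α ∧ f₂ (f₁ (x', s₁), s₂) = α).card : ℝ)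
        = (E.card : ℝ) * (Fintype.card S₂ : ℝ) := by
      rw [Finset.sum_congr rfl (fun s₁ hs₁ => ?_), Finset.sum_const, nsmul_eq_mul]
      have h : f₁ (x, s₁) = f₁ (x', s₁) := (Finset.mem_filter.mp hs₁).2
      rw [show (Finset.univ.filter fun s₂ : S₂ =>
          f₂ (f₁ (x, s₁), s₂) = α ∧ f₂ (f₁ (x', s₁), s₂) = α)
          = Finset.univ.filter fun s₂ : S₂ => f₂ (f₁ (x, s₁), s₂) = α by
        rw [← h]; simp]
      exact hACFU1 (f₁ (x, s₁)) α
    have h2 : ∑ s₁ ∈ N, (Fintype.card A₂ : ℝ) *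
        ((Finset.univ.filter fun s₂ : S₂ =>
          f₂ (f₁ (x, s₁), s₂) = α ∧ f₂ (f₁ (x', s₁), s₂) = α).card : ℝ)
        ≤ (N.card : ℝ) * (ε₂ * (Fintype.card S₂ : ℝ)) := by
      have := Finset.sum_le_card_nsmul N _ (ε₂ * (Fintype.card S₂ : ℝ))
        (fun s₁ hs₁ => hACFU2 (f₁ (x, s₁)) (f₁ (x', s₁))
          ((Finset.mem_filter.mp hs₁).2) α)
      rwa [nsmul_eq_mul] at this
    -- bound on E.card
    have hEcard : (E.card : ℝ) ≤ ε₁ * (Fintype.card S₁ : ℝ) := by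
      have hsum : (E.card : ℝ) = ∑ a : A₁,
          ((Finset.univ.filter fun s : S₁ => f₁ (x, s) = a ∧ f₁ (x', s) = a).card : ℝ) := by
        rw [hEdef, card_eq_fiber_sum (fun s => f₁ (x, s)) (fun s => f₁ (x', s))]
        push_cast
        rfl
      have : (Fintype.card A₁ : ℝ) * (E.card : ℝ)
          ≤ (Fintype.card A₁ : ℝ) * (ε₁ * (Fintype.card S₁ : ℝ)) := by
        rw [hsum, Finset.mul_sum]
        calc ∑ a : A₁, (Fintype.card A₁ : ℝ) *
              ((Finset.univ.filter fun s : S₁ => f₁ (x, s) = a ∧ f₁ (x', s) = a).card : ℝ)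
            ≤ ∑ a : A₁, ε₁ * (Fintype.card S₁ : ℝ) :=
              Finset.sum_le_sum fun a _ => hASU2 x x' hxx' a a
          _ = (Fintype.card A₁ : ℝ) * (ε₁ * (Fintype.card S₁ : ℝ)) := by
              rw [Finset.sum_const, Finset.card_univ, nsmul_eq_mul]
      exact le_of_mul_le_mul_left this hA₁pos
    -- bound on N.card
    have hNcard : (N.card : ℝ) ≤ ε₁ * ((Fintype.card A₁ : ℝ) - 1) * (Fintype.card S₁ : ℝ) := by
      have hsum : (N.card : ℝ) = ∑ a : A₁, ∑ a' : A₁,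
          (if a ≠ a' then
            ((Finset.univ.filter fun s : S₁ => f₁ (x, s) = a ∧ f₁ (x', s) = a').card : ℝ)
          else 0) := by
        rw [hNdef, card_ne_fiber_sum (fun s => f₁ (x, s)) (fun s => f₁ (x', s))]
        push_cast
        exact Finset.sum_congr rfl fun a _ => Finset.sum_congr rfl fun a' _ => by
          split <;> simp
      have hmul : (Fintype.card A₁ : ℝ) * (N.card : ℝ)
          ≤ (Fintype.card A₁ : ℝ) * (ε₁ * ((Fintype.card A₁ : ℝ) - 1) * (Fintype.card S₁ : ℝ)) := by
        rw [hsum, Finset.mul_sum]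
        calc ∑ a : A₁, (Fintype.card A₁ : ℝ) * ∑ a' : A₁,
              (if a ≠ a' then
                ((Finset.univ.filter fun s : S₁ => f₁ (x, s) = a ∧ f₁ (x', s) = a').card : ℝ)
              else 0)
            ≤ ∑ a : A₁, ∑ a' : A₁, (if a ≠ a' then ε₁ * (Fintype.card S₁ : ℝ) else 0) := by
              refine Finset.sum_le_sum fun a _ => ?_
              rw [Finset.mul_sum]
              refine Finset.sum_le_sum fun a' _ => ?_
              by_cases hc : a ≠ a'
              · simpa [hc] using hASU2 x x' hxx' a a'
              · simp [hc]
          _ = ∑ a : A₁, (((Fintype.card A₁ : ℝ)) - 1) * (ε₁ * (Fintype.card S₁ : ℝ)) := by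
              refine Finset.sum_congr rfl fun a _ => ?_
              rw [show (∑ a' : A₁, (if a ≠ a' then ε₁ * (Fintype.card S₁ : ℝ) else 0))
                  = ∑ a' : A₁, (ε₁ * (Fintype.card S₁ : ℝ)
                      - (if a = a' then ε₁ * (Fintype.card S₁ : ℝ) else 0)) from
                Finset.sum_congr rfl fun a' _ => by by_cases hc : a = a' <;> simp [hc]]
              rw [Finset.sum_sub_distrib, Finset.sum_const, Finset.card_univ,
                Finset.sum_ite_eq Finset.univ a (fun _ => ε₁ * (Fintype.card S₁ : ℝ)),
                if_pos (Finset.mem_univ a), nsmul_eq_mul]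
              ring
          _ = (Fintype.card A₁ : ℝ) * (ε₁ * ((Fintype.card A₁ : ℝ) - 1) * (Fintype.card S₁ : ℝ)) := by
              rw [Finset.sum_const, Finset.card_univ, nsmul_eq_mul]
              ring
      exact le_of_mul_le_mul_left hmul hA₁pos
    rw [h1]
    have hS₂pos : (0 : ℝ) ≤ (Fintype.card S₂ : ℝ) := by positivity
    rw [Fintype.card_prod]
    push_cast
    nlinarith [h2, hEcard, hNcard, mul_nonneg hε₂ hS₂pos,
      mul_le_mul_of_nonneg_right hNcard (mul_nonneg hε₂ hS₂pos),
      mul_le_mul_of_nonneg_right hEcard hS₂pos]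
end

section
/- Let X, S, A be finite nonempty sets, ε ≥ 0 real, and let f : X × S → A be an ε-almost collision-flat universal (ε-ACFU) hash function. Then for every α ∈ A and every nonnegative function p : X → ℝ, ∑_{x ∈ X} ∑_{x' ∈ X} p(x)·p(x')·|{s ∈ S : f(x,s) = f(x',s) = α}| ≤ (|S|/|A|) · ( (1 − ε)·∑_{x ∈ X} p(x)² + ε·(∑_{x ∈ X} p(x))² ). -/
/-- The key bilinear-form inequality pᵀN_αN_αᵀp ≤
(|S|/|A|)((1 − ε)pᵀp + ε(pᵀj)²) for an ε-ACFU hash function and nonnegative p. -/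
theorem acfu_bilinear_form_bound {X S A : Type*} [Fintype X] [Fintype S] [Fintype A]
    [Nonempty X] [Nonempty S] [Nonempty A] [DecidableEq A]
    (ε : ℝ) (hε : 0 ≤ ε) (f : X × S → A)
    (hACFU1 : ∀ (x : X) (α : A),
      (Fintype.card A : ℝ) * ((Finset.univ.filter fun s : S => f (x, s) = α).card : ℝ)
        = (Fintype.card S : ℝ))
    (hACFU2 : ∀ (x x' : X), x ≠ x' → ∀ (α : A),
      (Fintype.card A : ℝ) *
          ((Finset.univ.filter fun s : S => f (x, s) = α ∧ f (x', s) = α).card : ℝ)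
        ≤ ε * (Fintype.card S : ℝ)) :
    ∀ (α : A) (p : X → ℝ), (∀ x, 0 ≤ p x) →
      ∑ x : X, ∑ x' : X, p x * p x' *
          ((Finset.univ.filter fun s : S => f (x, s) = α ∧ f (x', s) = α).card : ℝ)
        ≤ (Fintype.card S : ℝ) / (Fintype.card A : ℝ) *
            ((1 - ε) * ∑ x : X, (p x) ^ 2 + ε * (∑ x : X, p x) ^ 2) := by
  intro α p hp
  classical
  have hA : (0:ℝ) < (Fintype.card A : ℝ) := by
    exact_mod_cast Fintype.card_pos
  set c : ℝ := (Fintype.card S : ℝ) / (Fintype.card A : ℝ) with hc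
  have hdiag : ∀ x : X,
      ((Finset.univ.filter fun s : S => f (x, s) = α ∧ f (x, s) = α).card : ℝ) = c := by
    intro x
    have hset : (Finset.univ.filter fun s : S => f (x, s) = α ∧ f (x, s) = α) =
        Finset.univ.filter fun s : S => f (x, s) = α := by
      apply Finset.filter_congr
      intro s _
      simp
    rw [hset, hc, eq_div_iff (ne_of_gt hA)]
    have := hACFU1 x α
    linarith
  have hoff : ∀ x x' : X, x ≠ x' →
      ((Finset.univ.filter fun s : S => f (x, s) = α ∧ f (x', s) = α).card : ℝ) ≤ ε * c := by
    intro x x' h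
    have h2 := hACFU2 x x' h α
    rw [hc, ← mul_div_assoc, le_div_iff₀ hA]
    nlinarith [h2]
  have step1 : ∑ x : X, ∑ x' : X, p x * p x' *
          ((Finset.univ.filter fun s : S => f (x, s) = α ∧ f (x', s) = α).card : ℝ)
      ≤ ∑ x : X, ∑ x' : X, p x * p x' * (if x = x' then c else ε * c) := by
    apply Finset.sum_le_sum
    intro x _
    apply Finset.sum_le_sum
    intro x' _
    by_cases h : x = x'
    · subst h
      rw [if_pos rfl, hdiag]
    · rw [if_neg h]
      exact mul_le_mul_of_nonneg_left (hoff x x' h) (mul_nonneg (hp x) (hp x'))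
  refine step1.trans_eq ?_
  have key : ∀ x : X, ∑ x' : X, p x * p x' * (if x = x' then c else ε * c)
      = p x * p x * ((1 - ε) * c) + ∑ x' : X, p x * p x' * (ε * c) := by
    intro x
    have : ∀ x' : X, p x * p x' * (if x = x' then c else ε * c)
        = (if x = x' then p x * p x' * ((1 - ε) * c) else 0) + p x * p x' * (ε * c) := by
      intro x'
      by_cases h : x = x' <;> simp [h] <;> ring
    rw [Finset.sum_congr rfl (fun x' _ => this x'), Finset.sum_add_distrib,
      Finset.sum_ite_eq Finset.univ x (fun x' => p x * p x' * ((1 - ε) * c))]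
    simp
  rw [Finset.sum_congr rfl (fun x _ => key x), Finset.sum_add_distrib]
  have h1 : ∑ x : X, p x * p x * ((1 - ε) * c) = ((1 - ε) * c) * ∑ x : X, (p x) ^ 2 := by
    rw [Finset.mul_sum]; congr 1; ext x; ring
  have h2 : ∑ x : X, ∑ x' : X, p x * p x' * (ε * c) = (ε * c) * (∑ x : X, p x) ^ 2 := by
    rw [sq, Finset.sum_mul_sum, Finset.mul_sum]
    congr 1; ext x
    rw [Finset.mul_sum]
    congr 1; ext x'
    ring
  rw [h1, h2]
  ring
end

section
/- Let X, Z, S, A be finite nonempty sets, ε ≥ 0 real, and let f : X × S → A be an ε-almost collision-flat universal (ε-ACFU) hash function. Let p : X × Z → ℝ be a probability distribution (p ≥ 0 and ∑_{x,z} p(x,z) = 1) with p_Z(z) := ∑_x p(x,z) > 0 for every z ∈ Z, and let H ≥ 0 be a real number such that ∑_{z ∈ Z} (∑_{x ∈ X} p(x,z)²)/p_Z(z) ≤ 2^{−H} (i.e., the conditional Rényi 2-entropy H₂(X|Z) is at least H). For each α ∈ A define q_α : Z × S → ℝ by q_α(z,s) = (|A|/|S|)·∑_{x : f(x,s) = α}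 p(x,z). Then: (a) for every z ∈ Z and α ∈ A, (1/|S|)·∑_{s ∈ S} ∑_{x : f(x,s) = α} p(x,z) = p_Z(z)/|A| (the key A = f(X,S) is uniform and independent of Z); and (b) for all α, α' ∈ A, ∑_{z ∈ Z} ∑_{s ∈ S} |q_α(z,s) − q_{α'}(z,s)| ≤ 2·√( (1 − ε)·|A|·2^{−H} + |A|·ε − 1 ). -/
/-- Privacy amplification with an ε-ACFU hash function: the key
A = f(X,S) is uniform and independent of Z, and any two key values are nearly
indistinguishable given (Z,S), with bound 2√((1−ε)|A|2^(−H) + |A|ε − 1). -/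
theorem acfu_privacy_amplification {X Z S A : Type*}
    [Fintype X] [Fintype Z] [Fintype S] [Fintype A]
    [Nonempty X] [Nonempty Z] [Nonempty S] [Nonempty A] [DecidableEq A]
    (ε : ℝ) (hε : 0 ≤ ε) (f : X × S → A)
    (hACFU1 : ∀ (x : X) (α : A),
      (Fintype.card A : ℝ) * ((Finset.univ.filter fun s : S => f (x, s) = α).card : ℝ)
        = (Fintype.card S : ℝ))
    (hACFU2 : ∀ (x x' : X), x ≠ x' → ∀ (α : A),
      (Fintype.card A : ℝ) *
          ((Finset.univ.filter fun s : S => f (x, s) = α ∧ f (x', s) = α).card : ℝ)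
        ≤ ε * (Fintype.card S : ℝ))
    (p : X × Z → ℝ) (hp : ∀ xz, 0 ≤ p xz) (hpsum : ∑ xz : X × Z, p xz = 1)
    (hpZ : ∀ z : Z, 0 < ∑ x : X, p (x, z))
    (H : ℝ) (hH : 0 ≤ H)
    (hRenyi : ∑ z : Z, (∑ x : X, (p (x, z)) ^ 2) / (∑ x : X, p (x, z)) ≤ (2 : ℝ) ^ (-H))
    (q : A → Z → S → ℝ)
    (hq : ∀ (α : A) (z : Z) (s : S),
      q α z s = (Fintype.card A : ℝ) / (Fintype.card S : ℝ) *
        ∑ x ∈ Finset.univ.filter fun x : X => f (x, s) = α, p (x, z)) :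
    (∀ (z : Z) (α : A),
      (1 / (Fintype.card S : ℝ)) *
          ∑ s : S, ∑ x ∈ Finset.univ.filter fun x : X => f (x, s) = α, p (x, z)
        = (∑ x : X, p (x, z)) / (Fintype.card A : ℝ)) ∧
    (∀ α α' : A,
      ∑ z : Z, ∑ s : S, |q α z s - q α' z s|
        ≤ 2 * Real.sqrt ((1 - ε) * (Fintype.card A : ℝ) * (2 : ℝ) ^ (-H)
            + (Fintype.card A : ℝ) * ε - 1)) := by
  classical
  have hS0 : (0:ℝ) < (Fintype.card S : ℝ) := by exact_mod_cast Fintype.card_pos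
  have hA0 : (0:ℝ) < (Fintype.card A : ℝ) := by exact_mod_cast Fintype.card_pos
  set cA : ℝ := (Fintype.card A : ℝ) with hcA
  set cS : ℝ := (Fintype.card S : ℝ) with hcS
  -- cardinality of the single-condition filter
  have hcard1 : ∀ (x : X) (α : A),
      (((Finset.univ.filter fun s : S => f (x, s) = α).card : ℝ)) = cS / cA := by
    intro x α
    have := hACFU1 x α
    field_simp
    linarith [this]
  -- key computation for part (a)
  have key : ∀ (z : Z) (α : A),
      ∑ s : S, ∑ x ∈ Finset.univ.filter (fun x : X => f (x, s) = α), p (x, z)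
        = cS / cA * ∑ x : X, p (x, z) := by
    intro z α
    have h1 : ∀ s : S, ∑ x ∈ Finset.univ.filter (fun x : X => f (x, s) = α), p (x, z)
        = ∑ x : X, if f (x, s) = α then p (x, z) else 0 := by
      intro s; rw [Finset.sum_filter]
    rw [Finset.sum_congr rfl fun s _ => h1 s, Finset.sum_comm]
    rw [Finset.mul_sum]
    refine Finset.sum_congr rfl fun x _ => ?_
    have h2 : ∑ s : S, (if f (x, s) = α then p (x, z) else 0)
        = ∑ s ∈ Finset.univ.filter (fun s : S => f (x, s) = α), p (x, z) := by
      rw [Finset.sum_filter]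
    rw [h2, Finset.sum_const, nsmul_eq_mul, hcard1 x α]
  have parta : ∀ (z : Z) (α : A),
      (1 / cS) * ∑ s : S, ∑ x ∈ Finset.univ.filter (fun x : X => f (x, s) = α), p (x, z)
        = (∑ x : X, p (x, z)) / cA := by
    intro z α
    rw [key z α]
    field_simp
  refine ⟨parta, ?_⟩
  -- part (b)
  intro α₀ α₀'
  set pZ : Z → ℝ := fun z => ∑ x : X, p (x, z) with hpZdef
  have hpZapp : ∀ z : Z, pZ z = ∑ x : X, p (x, z) := fun z => rfl
  have hpZpos : ∀ z : Z, 0 < pZ z := fun z => hpZ z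
  have hpZsum : ∑ z : Z, pZ z = 1 := by
    rw [← hpsum, Fintype.sum_prod_type]
    exact Finset.sum_comm
  set u : Z → ℝ := fun z => pZ z / cS with hudef
  have huapp : ∀ z : Z, u z = pZ z / cS := fun z => rfl
  have hu : ∀ z, 0 < u z := fun z => div_pos (hpZpos z) hS0
  set ε' : ℝ := min ε 1 with hε'def
  have hε'0 : 0 ≤ ε' := le_min hε zero_le_one
  have hε'1 : ε' ≤ 1 := min_le_right _ _
  have hε'ε : ε' ≤ ε := min_le_left _ _
  set B : ℝ := (1 - ε) * cA * (2:ℝ) ^ (-H) + cA * ε - 1 with hBdef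
  have h2H1 : (2:ℝ) ^ (-H) ≤ 1 :=
    Real.rpow_le_one_of_one_le_of_nonpos (by norm_num) (by linarith)
  have h2H0 : (0:ℝ) < (2:ℝ) ^ (-H) := Real.rpow_pos_of_pos (by norm_num) _
  -- sum of q over s is pZ z
  have hqsum : ∀ (α : A) (z : Z), ∑ s : S, q α z s = pZ z := by
    intro α z
    have h1 : ∑ s : S, q α z s = cA / cS *
        ∑ s : S, ∑ x ∈ Finset.univ.filter (fun x : X => f (x, s) = α), p (x, z) := by
      rw [Finset.mul_sum]
      exact Finset.sum_congr rfl fun s _ => hq α z s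
    rw [h1, key z α, hpZapp z]
    field_simp
  -- the χ² bound
  have hD : ∀ α : A, ∑ z : Z, ∑ s : S, (q α z s - u z) ^ 2 / u z ≤ B := by
    intro α
    have hexp : ∀ z s, (q α z s - u z) ^ 2 / u z
        = q α z s ^ 2 / u z - 2 * q α z s + u z := by
      intro z s
      have h := (hu z).ne'
      field_simp
      ring
    have hsplit : ∑ z : Z, ∑ s : S, (q α z s - u z) ^ 2 / u z
        = (∑ z : Z, ∑ s : S, q α z s ^ 2 / u z) - 1 := by
      have h1 : ∀ z : Z, ∑ s : S, (q α z s - u z) ^ 2 / u z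
          = (∑ s : S, q α z s ^ 2 / u z) - 2 * pZ z + pZ z := by
        intro z
        rw [Finset.sum_congr rfl fun s _ => hexp z s, Finset.sum_add_distrib,
          Finset.sum_sub_distrib, ← Finset.mul_sum, hqsum α z, Finset.sum_const,
          nsmul_eq_mul, huapp z]
        have h := hS0.ne'
        rw [Finset.card_univ, ← hcS]
        field_simp
        simp only [mul_comm cS]
      rw [Finset.sum_congr rfl fun z _ => h1 z, Finset.sum_add_distrib,
        Finset.sum_sub_distrib, ← Finset.mul_sum, hpZsum]
      ring
    rw [hsplit]
    -- now bound ∑ q^2/u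
    have hQ : ∀ z : Z, ∑ s : S, q α z s ^ 2
        ≤ cA / cS * ((1 - ε') * (∑ x : X, p (x, z) ^ 2) + ε' * pZ z ^ 2) := by
      intro z
      have hT : ∀ s : S, q α z s ^ 2 = (cA / cS) ^ 2 *
          ∑ x : X, ∑ x' : X,
            (if f (x, s) = α ∧ f (x', s) = α then p (x, z) * p (x', z) else 0) := by
        intro s
        rw [hq α z s, mul_pow, Finset.sum_filter, sq
          (∑ x : X, if f (x, s) = α then p (x, z) else 0), Finset.sum_mul_sum]
        congr 1
        refine Finset.sum_congr rfl fun x _ => Finset.sum_congr rfl fun x' _ => ?_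
        exact ite_zero_mul_ite_zero _ _ _ _
      rw [Finset.sum_congr rfl fun s _ => hT s, ← Finset.mul_sum, Finset.sum_comm]
      have hswap : ∀ x : X, ∑ s : S, ∑ x' : X,
            (if f (x, s) = α ∧ f (x', s) = α then p (x, z) * p (x', z) else 0)
          = ∑ x' : X, p (x, z) * p (x', z) *
              ((Finset.univ.filter fun s : S => f (x, s) = α ∧ f (x', s) = α).card : ℝ) := by
        intro x
        rw [Finset.sum_comm]
        refine Finset.sum_congr rfl fun x' _ => ?_
        rw [← Finset.sum_filter, Finset.sum_const, nsmul_eq_mul, mul_comm]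
      rw [Finset.sum_congr rfl fun x _ => hswap x]
      -- bound each term
      have hbound : ∀ x x' : X, p (x, z) * p (x', z) *
            ((Finset.univ.filter fun s : S => f (x, s) = α ∧ f (x', s) = α).card : ℝ)
          ≤ p (x, z) * p (x', z) *
            (ε' * (cS / cA) + (if x = x' then (1 - ε') * (cS / cA) else 0)) := by
        intro x x'
        by_cases hxx : x = x'
        · subst hxx
          have hfil : (Finset.univ.filter fun s : S => f (x, s) = α ∧ f (x, s) = α)
              = Finset.univ.filter fun s : S => f (x, s) = α := by
            simp
          rw [hfil, hcard1 x α, if_pos rfl]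
          apply le_of_eq
          ring
        · rw [if_neg hxx, add_zero]
          have hmul : (0:ℝ) ≤ p (x, z) * p (x', z) := mul_nonneg (hp _) (hp _)
          refine mul_le_mul_of_nonneg_left ?_ hmul
          have h1 : cA * ((Finset.univ.filter fun s : S =>
              f (x, s) = α ∧ f (x', s) = α).card : ℝ) ≤ ε * cS := hACFU2 x x' hxx α
          have hsub : (Finset.univ.filter fun s : S => f (x, s) = α ∧ f (x', s) = α)
              ⊆ Finset.univ.filter fun s : S => f (x, s) = α := by
            intro s hs
            simp only [Finset.mem_filter] at hs ⊢
            exact ⟨hs.1, hs.2.1⟩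
          have h2 : ((Finset.univ.filter fun s : S =>
              f (x, s) = α ∧ f (x', s) = α).card : ℝ)
              ≤ ((Finset.univ.filter fun s : S => f (x, s) = α).card : ℝ) :=
            Nat.cast_le.mpr (Finset.card_le_card hsub)
          have h3 : cA * ((Finset.univ.filter fun s : S =>
              f (x, s) = α ∧ f (x', s) = α).card : ℝ) ≤ ε' * cS := by
            rcases min_cases ε 1 with ⟨he, _⟩ | ⟨he, _⟩
            · rw [hε'def, he]; exact h1
            · rw [hε'def, he, one_mul]
              calc cA * _ ≤ cA * ((Finset.univ.filter fun s : S =>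
                    f (x, s) = α).card : ℝ) :=
                    mul_le_mul_of_nonneg_left h2 hA0.le
                _ = cS := hACFU1 x α
          rw [show ε' * (cS / cA) = ε' * cS / cA by ring, le_div_iff₀ hA0]
          nlinarith [h3]
      have pointwise : ∀ x x' : X, p (x, z) * p (x', z) *
            (ε' * (cS / cA) + (if x = x' then (1 - ε') * (cS / cA) else 0))
          = (ε' * (cS / cA) * p (x, z)) * p (x', z)
            + (if x' = x then (1 - ε') * (cS / cA) * p (x, z) ^ 2 else 0) := by
        intro x x'
        by_cases hxx : x = x'
        · subst hxx
          rw [if_pos rfl, if_pos rfl]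
          ring
        · rw [if_neg hxx, if_neg (Ne.symm hxx)]
          ring
      have hinner : ∀ x : X, ∑ x' : X, p (x, z) * p (x', z) *
            (ε' * (cS / cA) + (if x = x' then (1 - ε') * (cS / cA) else 0))
          = ε' * (cS / cA) * p (x, z) * pZ z
            + (1 - ε') * (cS / cA) * p (x, z) ^ 2 := by
        intro x
        rw [Finset.sum_congr rfl fun x' _ => pointwise x x', Finset.sum_add_distrib,
          ← Finset.mul_sum,
          Finset.sum_ite_eq' Finset.univ x (fun _ => (1 - ε') * (cS / cA) * p (x, z) ^ 2),
          if_pos (Finset.mem_univ x), ← hpZapp z, mul_assoc]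
      calc (cA / cS) ^ 2 * ∑ x : X, ∑ x' : X, p (x, z) * p (x', z) *
            ((Finset.univ.filter fun s : S => f (x, s) = α ∧ f (x', s) = α).card : ℝ)
          ≤ (cA / cS) ^ 2 * ∑ x : X, ∑ x' : X, p (x, z) * p (x', z) *
            (ε' * (cS / cA) + (if x = x' then (1 - ε') * (cS / cA) else 0)) := by
            refine mul_le_mul_of_nonneg_left ?_ (by positivity)
            exact Finset.sum_le_sum fun x _ => Finset.sum_le_sum fun x' _ => hbound x x'
        _ = (cA / cS) ^ 2 * ∑ x : X, (ε' * (cS / cA) * p (x, z) * pZ z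
              + (1 - ε') * (cS / cA) * p (x, z) ^ 2) := by
            rw [Finset.sum_congr rfl fun x _ => hinner x]
        _ = cA / cS * ((1 - ε') * (∑ x : X, p (x, z) ^ 2) + ε' * pZ z ^ 2) := by
            rw [Finset.sum_add_distrib]
            have e1 : ∑ x : X, ε' * (cS / cA) * p (x, z) * pZ z
                = ε' * (cS / cA) * pZ z ^ 2 := by
              have : ∀ x : X, ε' * (cS / cA) * p (x, z) * pZ z
                  = (ε' * (cS / cA) * pZ z) * p (x, z) := fun x => by ring
              rw [Finset.sum_congr rfl fun x _ => this x, ← Finset.mul_sum, ← hpZapp z]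
              ring
            have e2 : ∑ x : X, (1 - ε') * (cS / cA) * p (x, z) ^ 2
                = (1 - ε') * (cS / cA) * ∑ x : X, p (x, z) ^ 2 := by
              rw [Finset.mul_sum]
            rw [e1, e2]
            have h4 := hS0.ne'
            have h5 := hA0.ne'
            field_simp
            ring
    have hQz : ∀ z : Z, ∑ s : S, q α z s ^ 2 / u z
        ≤ cA * ((1 - ε') * ((∑ x : X, p (x, z) ^ 2) / pZ z) + ε' * pZ z) := by
      intro z
      have h1 : ∑ s : S, q α z s ^ 2 / u z = (∑ s : S, q α z s ^ 2) / u z := by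
        rw [Finset.sum_div]
      rw [h1, div_le_iff₀ (hu z)]
      calc (∑ s : S, q α z s ^ 2)
          ≤ cA / cS * ((1 - ε') * (∑ x : X, p (x, z) ^ 2) + ε' * pZ z ^ 2) := hQ z
        _ = cA * ((1 - ε') * ((∑ x : X, p (x, z) ^ 2) / pZ z) + ε' * pZ z) * u z := by
            have h2 := (hpZpos z).ne'
            have hc : ((∑ x : X, p (x, z) ^ 2) / pZ z) * pZ z = ∑ x : X, p (x, z) ^ 2 :=
              div_mul_cancel₀ _ h2
            rw [huapp z]
            calc cA / cS * ((1 - ε') * (∑ x : X, p (x, z) ^ 2) + ε' * pZ z ^ 2)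
                = cA / cS * ((1 - ε') * (((∑ x : X, p (x, z) ^ 2) / pZ z) * pZ z)
                    + ε' * pZ z ^ 2) := by rw [hc]
              _ = cA * ((1 - ε') * ((∑ x : X, p (x, z) ^ 2) / pZ z) + ε' * pZ z)
                    * (pZ z / cS) := by ring
    have hQtot : ∑ z : Z, ∑ s : S, q α z s ^ 2 / u z
        ≤ cA * (1 - ε') * (∑ z : Z, (∑ x : X, p (x, z) ^ 2) / pZ z) + cA * ε' := by
      calc ∑ z : Z, ∑ s : S, q α z s ^ 2 / u z
          ≤ ∑ z : Z, cA * ((1 - ε') * ((∑ x : X, p (x, z) ^ 2) / pZ z) + ε' * pZ z) :=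
            Finset.sum_le_sum fun z _ => hQz z
        _ = cA * (1 - ε') * (∑ z : Z, (∑ x : X, p (x, z) ^ 2) / pZ z)
            + cA * ε' * ∑ z : Z, pZ z := by
            rw [Finset.mul_sum, Finset.mul_sum, ← Finset.sum_add_distrib]
            exact Finset.sum_congr rfl fun z _ => by ring
        _ = _ := by rw [hpZsum]; ring
    have hRenyi' : ∑ z : Z, (∑ x : X, p (x, z) ^ 2) / pZ z ≤ (2:ℝ) ^ (-H) := by
      calc ∑ z : Z, (∑ x : X, p (x, z) ^ 2) / pZ z
          = ∑ z : Z, (∑ x : X, p (x, z) ^ 2) / (∑ x : X, p (x, z)) :=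
            Finset.sum_congr rfl fun z _ => by rw [hpZapp z]
        _ ≤ (2:ℝ) ^ (-H) := hRenyi
    have hR : cA * (1 - ε') * (∑ z : Z, (∑ x : X, p (x, z) ^ 2) / pZ z)
        ≤ cA * (1 - ε') * (2:ℝ) ^ (-H) := by
      refine mul_le_mul_of_nonneg_left hRenyi' ?_
      have h6 : 0 ≤ 1 - ε' := by linarith
      positivity
    have hkey : 0 ≤ cA * (ε - ε') * (1 - (2:ℝ) ^ (-H)) :=
      mul_nonneg (mul_nonneg hA0.le (by linarith)) (by linarith)
    have hfinal : cA * (1 - ε') * (2:ℝ) ^ (-H) + cA * ε' - 1 ≤ B := by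
      rw [hBdef]
      nlinarith [hkey]
    linarith
  have hB0 : 0 ≤ B := by
    have h1 : 0 ≤ ∑ z : Z, ∑ s : S, (q α₀ z s - u z) ^ 2 / u z :=
      Finset.sum_nonneg fun z _ => Finset.sum_nonneg fun s _ =>
        div_nonneg (sq_nonneg _) (hu z).le
    linarith [hD α₀]
  -- Cauchy–Schwarz step
  have hCS : ∀ α : A, ∑ z : Z, ∑ s : S, |q α z s - u z| ≤ Real.sqrt B := by
    intro α
    set T : ℝ := ∑ z : Z, ∑ s : S, |q α z s - u z| with hTdef
    have hT0 : 0 ≤ T :=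
      Finset.sum_nonneg fun z _ => Finset.sum_nonneg fun s _ => abs_nonneg _
    have hcs : T ^ 2 ≤ (∑ zs : Z × S, u zs.1) *
        ∑ zs : Z × S, (q α zs.1 zs.2 - u zs.1) ^ 2 / u zs.1 := by
      have hmain := Finset.sum_mul_sq_le_sq_mul_sq Finset.univ
        (fun zs : Z × S => Real.sqrt (u zs.1))
        (fun zs : Z × S => |q α zs.1 zs.2 - u zs.1| / Real.sqrt (u zs.1))
      have heq1 : ∀ zs : Z × S, Real.sqrt (u zs.1) *
          (|q α zs.1 zs.2 - u zs.1| / Real.sqrt (u zs.1)) = |q α zs.1 zs.2 - u zs.1| := by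
        intro zs
        rw [mul_div_cancel₀]
        exact (Real.sqrt_pos.mpr (hu zs.1)).ne'
      have heq2 : ∀ zs : Z × S, Real.sqrt (u zs.1) ^ 2 = u zs.1 := fun zs =>
        Real.sq_sqrt (hu zs.1).le
      have heq3 : ∀ zs : Z × S, (|q α zs.1 zs.2 - u zs.1| / Real.sqrt (u zs.1)) ^ 2
          = (q α zs.1 zs.2 - u zs.1) ^ 2 / u zs.1 := by
        intro zs
        rw [div_pow, sq_abs, Real.sq_sqrt (hu zs.1).le]
      rw [Finset.sum_congr rfl fun zs _ => heq1 zs,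
        Finset.sum_congr rfl fun zs _ => heq2 zs,
        Finset.sum_congr rfl fun zs _ => heq3 zs] at hmain
      have hTeq : T = ∑ zs : Z × S, |q α zs.1 zs.2 - u zs.1| := by
        rw [hTdef, Fintype.sum_prod_type]
      rw [hTeq]
      exact hmain
    have hu1 : ∑ zs : Z × S, u zs.1 = 1 := by
      rw [Fintype.sum_prod_type]
      have h7 : ∀ z : Z, ∑ _s : S, u z = pZ z := by
        intro z
        rw [Finset.sum_const, nsmul_eq_mul, huapp z]
        field_simp
        rw [Finset.card_univ, ← hcS, mul_comm]
      rw [Finset.sum_congr rfl fun z _ => h7 z, hpZsum]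
    have hDeq : ∑ zs : Z × S, (q α zs.1 zs.2 - u zs.1) ^ 2 / u zs.1
        = ∑ z : Z, ∑ s : S, (q α z s - u z) ^ 2 / u z := Fintype.sum_prod_type _
    rw [hu1, one_mul, hDeq] at hcs
    have hT2B : T ^ 2 ≤ B := le_trans hcs (hD α)
    calc T = Real.sqrt (T ^ 2) := by rw [Real.sqrt_sq hT0]
      _ ≤ Real.sqrt B := Real.sqrt_le_sqrt hT2B
  -- triangle inequality
  calc ∑ z : Z, ∑ s : S, |q α₀ z s - q α₀' z s|
      ≤ ∑ z : Z, ∑ s : S, (|q α₀ z s - u z| + |q α₀' z s - u z|) := by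
        refine Finset.sum_le_sum fun z _ => Finset.sum_le_sum fun s _ => ?_
        calc |q α₀ z s - q α₀' z s| ≤ |q α₀ z s - u z| + |u z - q α₀' z s| :=
              abs_sub_le _ _ _
          _ = |q α₀ z s - u z| + |q α₀' z s - u z| := by rw [abs_sub_comm (u z)]
    _ = (∑ z : Z, ∑ s : S, |q α₀ z s - u z|) + ∑ z : Z, ∑ s : S, |q α₀' z s - u z| := by
        rw [← Finset.sum_add_distrib]
        exact Finset.sum_congr rfl fun z _ => Finset.sum_add_distrib
    _ ≤ Real.sqrt B + Real.sqrt B := add_le_add (hCS α₀) (hCS α₀')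
    _ = 2 * Real.sqrt B := by ring
end
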